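/- For every SID Δ and nullary predicate A, if ef*(C[[A]]_Δ) is treewidth-bounded, then ief*(C[[A]]_Δ) is treewidth-bounded. -/

import Mathlib

/-!
Common definitions for the formalization of
"The Treewidth Boundedness Problem for an Inductive Separation Logic of Relations".
-/

namespace SLRTW

/-! ### Relational structures over a fixed universe `V` -/

/-- A structure over the relational signature given by `Rel`, `ar` with universe `V`:
each relation symbol is interpreted as a finite set of tuples, and only finitely many
relation symbols have a nonempty interpretation. -/
structure Str (Rel : Type) (ar : Rel → ℕ) (V : Type) where
  interp : ∀ r : Rel, Set (Fin (ar r) → V)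
  finite_interp : ∀ r, (interp r).Finite
  finite_active : {r : Rel | interp r ≠ ∅}.Finite

/-- Formulas of the separation logic of relations, over relation symbols `Rel` (with
arities `ar`) and predicate symbols `Pr` (with arities `pa`).  Variables are natural
numbers; by convention, the parameters of a predicate of arity `n` are `0, …, n-1`. -/
inductive SLR (Rel : Type) (ar : Rel → ℕ) (Pr : Type) (pa : Pr → ℕ) : Type where
  | emp : SLR Rel ar Pr pa
  | eq (x y : ℕ) : SLR Rel ar Pr pa
  | ne (x y : ℕ) : SLR Rel ar Pr pa
  | rel (r : Rel) (a : Fin (ar r) → ℕ) : SLR Rel ar Pr pa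
  | pred (A : Pr) (a : Fin (pa A) → ℕ) : SLR Rel ar Pr pa
  | star (φ ψ : SLR Rel ar Pr pa) : SLR Rel ar Pr pa
  | ex (x : ℕ) (φ : SLR Rel ar Pr pa) : SLR Rel ar Pr pa

/-- An RGB color scheme: a partition of the set of colors `𝒫(Rel)` into red, green
and blue colors, such that any two blue colors intersect, every green color intersects
every blue color, and every red color is disjoint from some blue color. -/
structure RGB (Rel : Type) where
  red : Set (Set Rel)
  green : Set (Set Rel)
  blue : Set (Set Rel)
  cover : ∀ C : Set Rel, C ∈ red ∨ C ∈ green ∨ C ∈ blue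
  red_green : red ∩ green = ∅
  red_blue : red ∩ blue = ∅
  green_blue : green ∩ blue = ∅
  blue_blue_meet : ∀ C1 ∈ blue, ∀ C2 ∈ blue, (C1 ∩ C2).Nonempty
  green_blue_meet : ∀ C1 ∈ green, ∀ C2 ∈ blue, (C1 ∩ C2).Nonempty
  red_sep : ∀ C1 ∈ red, ∃ C2 ∈ blue, C1 ∩ C2 = ∅

section Defs1

variable {Rel : Type} {ar : Rel → ℕ} {V : Type} {Pr : Type} {pa : Pr → ℕ}

/-- The support of a structure: the elements occurring in some tuple. -/
def Str.supp (S : Str Rel ar V) : Set V :=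
  { u | ∃ (r : Rel) (t : Fin (ar r) → V), t ∈ S.interp r ∧ ∃ i, t i = u }

/-- Two structures are locally disjoint iff their interpretations are pointwise disjoint. -/
def LocDisj (S1 S2 : Str Rel ar V) : Prop :=
  ∀ r, S1.interp r ∩ S2.interp r = ∅

/-- Composition of structures (pointwise union of the interpretations). -/
def Str.comp (S1 S2 : Str Rel ar V) : Str Rel ar V where
  interp r := S1.interp r ∪ S2.interp r
  finite_interp r := (S1.finite_interp r).union (S2.finite_interp r)
  finite_active := by
    refine (S1.finite_active.union S2.finite_active).subset ?_
    intro r hr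
    simp only [Set.mem_setOf_eq, Set.mem_union, ne_eq] at hr ⊢
    rw [Set.union_empty_iff] at hr
    tauto

/-- Composition of a finite family of structures. -/
def bigComp {n : ℕ} (Ss : Fin n → Str Rel ar V) : Str Rel ar V where
  interp r := ⋃ i, (Ss i).interp r
  finite_interp r := Set.finite_iUnion fun i => (Ss i).finite_interp r
  finite_active := by
    refine (Set.finite_iUnion fun i => (Ss i).finite_active).subset ?_
    intro r hr
    simp only [Set.mem_setOf_eq, ne_eq, Set.iUnion_eq_empty, Set.mem_iUnion] at hr ⊢
    push_neg at hr
    obtain ⟨i, hi⟩ := hr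
    exact ⟨i, Set.nonempty_iff_ne_empty.mp hi⟩

/-- A tree decomposition of a structure: a finite tree whose nodes carry finite bags of
elements, covering every tuple, and such that the set of nodes containing any given
support element is nonempty and connected. -/
structure TreeDecomp (S : Str Rel ar V) where
  ι : Type
  instFin : Fintype ι
  G : SimpleGraph ι
  isTree : G.IsTree
  bag : ι → Finset V
  bag_cover : ∀ (r : Rel), ∀ t ∈ S.interp r, ∃ n : ι, ∀ i, t i ∈ bag n
  bag_conn : ∀ u ∈ S.supp, (SimpleGraph.induce {n : ι | u ∈ bag n} G).Connected

attribute [instance] TreeDecomp.instFin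

/-- The width of a tree decomposition: maximal bag size minus one. -/
def TreeDecomp.width {S : Str Rel ar V} (T : TreeDecomp S) : ℕ :=
  (Finset.univ.sup fun n : T.ι => (T.bag n).card) - 1

/-- The treewidth of a structure: the minimal width of a tree decomposition. -/
noncomputable def tw (S : Str Rel ar V) : ℕ :=
  sInf { w | ∃ T : TreeDecomp S, T.width = w }

/-- A set of structures is treewidth-bounded iff the treewidths of its members are
bounded. -/
def TWB (𝒮 : Set (Str Rel ar V)) : Prop :=
  ∃ k : ℕ, ∀ S ∈ 𝒮, tw S ≤ k

/-- The supremum of the treewidths of a set of structures (in `ℕ∞`). -/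
noncomputable def twSet (𝒮 : Set (Str Rel ar V)) : ℕ∞ :=
  ⨆ S ∈ 𝒮, (tw S : ℕ∞)

namespace SLR

/-- Free variables of a formula. -/
def fv : SLR Rel ar Pr pa → Set ℕ
  | .emp => ∅
  | .eq x y => {x, y}
  | .ne x y => {x, y}
  | .rel _ a => Set.range a
  | .pred _ a => Set.range a
  | .star φ ψ => φ.fv ∪ ψ.fv
  | .ex x φ => φ.fv \ {x}

/-- All variables (free or bound) occurring in a formula. -/
def vars : SLR Rel ar Pr pa → Set ℕ
  | .emp => ∅
  | .eq x y => {x, y}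
  | .ne x y => {x, y}
  | .rel _ a => Set.range a
  | .pred _ a => Set.range a
  | .star φ ψ => φ.vars ∪ ψ.vars
  | .ex x φ => insert x φ.vars

/-- Predicate-free formulas. -/
def PredFree : SLR Rel ar Pr pa → Prop
  | .pred _ _ => False
  | .star φ ψ => φ.PredFree ∧ ψ.PredFree
  | .ex _ φ => φ.PredFree
  | _ => True

/-- Quantifier- and predicate-free (qpf) formulas. -/
def QPF : SLR Rel ar Pr pa → Prop
  | .pred _ _ => False
  | .ex _ _ => False
  | .star φ ψ => φ.QPF ∧ ψ.QPF
  | _ => True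

/-- Formulas containing only relation atoms. -/
def RelOnly : SLR Rel ar Pr pa → Prop
  | .rel _ _ => True
  | .star φ ψ => φ.RelOnly ∧ ψ.RelOnly
  | _ => False

/-- Formulas containing only equality atoms (and `emp`). -/
def EqOnly : SLR Rel ar Pr pa → Prop
  | .emp => True
  | .eq _ _ => True
  | .star φ ψ => φ.EqOnly ∧ ψ.EqOnly
  | _ => False

/-- Equality-free formulas: no equality atom and no predicate atom in which the same
variable occurs twice. -/
def EqFreeF : SLR Rel ar Pr pa → Prop
  | .eq _ _ => False
  | .pred _ a => Function.Injective a
  | .star φ ψ => φ.EqFreeF ∧ ψ.EqFreeF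
  | .ex _ φ => φ.EqFreeF
  | _ => True

/-- The number of predicate atoms occurring in a formula. -/
def npred : SLR Rel ar Pr pa → ℕ
  | .pred _ _ => 1
  | .star φ ψ => φ.npred + ψ.npred
  | .ex _ φ => φ.npred
  | _ => 0

/-- The number of relation atoms occurring in a formula. -/
def nrel : SLR Rel ar Pr pa → ℕ
  | .rel _ _ => 1
  | .star φ ψ => φ.nrel + ψ.nrel
  | .ex _ φ => φ.nrel
  | _ => 0

/-- The set of relation symbols occurring in a formula. -/
def rels : SLR Rel ar Pr pa → Set Rel
  | .rel r _ => {r}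
  | .star φ ψ => φ.rels ∪ ψ.rels
  | .ex _ φ => φ.rels
  | _ => ∅

/-- The set of predicate symbols occurring in a formula. -/
def preds : SLR Rel ar Pr pa → Set Pr
  | .pred A _ => {A}
  | .star φ ψ => φ.preds ∪ ψ.preds
  | .ex _ φ => φ.preds
  | _ => ∅

/-- The quantifier-free matrix of a formula (erasing all existential quantifiers). -/
def matrix : SLR Rel ar Pr pa → SLR Rel ar Pr pa
  | .ex _ φ => φ.matrix
  | .star φ ψ => .star φ.matrix ψ.matrix
  | φ => φ

/-- The list of bound variables of a formula. -/
def binders : SLR Rel ar Pr pa → List ℕ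
  | .ex x φ => x :: φ.binders
  | .star φ ψ => φ.binders ++ ψ.binders
  | _ => []

/-- A formula is well-named iff its bound variables are pairwise distinct and distinct
from its free variables.  For a well-named formula, the matrix faithfully represents
the prenex form. -/
def WellNamed (χ : SLR Rel ar Pr pa) : Prop :=
  χ.binders.Nodup ∧ ∀ x ∈ χ.binders, x ∉ χ.fv

/-- The disequality `x ≠ y` occurs in the formula (as an unordered pair). -/
def neOccurs : SLR Rel ar Pr pa → ℕ → ℕ → Prop
  | .ne a b, x, y => (a = x ∧ b = y) ∨ (a = y ∧ b = x)
  | .star φ ψ, x, y => φ.neOccurs x y ∨ ψ.neOccurs x y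
  | .ex _ φ, x, y => φ.neOccurs x y
  | _, _, _ => False

/-- The equality `x = y` occurs in the formula (as an unordered pair). -/
def eqOccurs : SLR Rel ar Pr pa → ℕ → ℕ → Prop
  | .eq a b, x, y => (a = x ∧ b = y) ∨ (a = y ∧ b = x)
  | .star φ ψ, x, y => φ.eqOccurs x y ∨ ψ.eqOccurs x y
  | .ex _ φ, x, y => φ.eqOccurs x y
  | _, _, _ => False

end SLR

/-- The nullary predicate atom `A()` (the arguments are irrelevant when `pa A = 0`). -/
def natom (A : Pr) : SLR Rel ar Pr pa := .pred A fun _ => 0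

/-- Iterated separating conjunction: `starAll φ [χ1, …, χn] = χ1 * (χ2 * … * (χn * φ))`. -/
def starAll (φ : SLR Rel ar Pr pa) : List (SLR Rel ar Pr pa) → SLR Rel ar Pr pa
  | [] => φ
  | χ :: l => .star χ (starAll φ l)

end Defs1

/-- A set of inductive definitions (SID): a finite set of rules `A(0,…,pa A - 1) ← φ`
where the free variables of `φ` are among the parameters `0, …, pa A - 1`. -/
structure SID (Rel : Type) (ar : Rel → ℕ) (Pr : Type) (pa : Pr → ℕ) where
  rules : Pr → Set (SLR Rel ar Pr pa)
  finite_rules : {p : Pr × SLR Rel ar Pr pa | p.2 ∈ rules p.1}.Finite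
  wf : ∀ A, ∀ φ ∈ rules A, SLR.fv φ ⊆ {x | x < pa A}

section Defs2

variable {Rel : Type} {ar : Rel → ℕ} {V : Type} {Pr : Type} {pa : Pr → ℕ}

/-- The empty structure predicate. -/
def EmpS (S : Str Rel ar V) : Prop := ∀ r, S.interp r = ∅

/-- The satisfaction relation of SLR, parameterized by a store and an SID.
A predicate atom `A(y₁,…,yₙ)` is satisfied iff the body of some rule for `A` is
satisfied under the store mapping the parameter `i` to the value of `yᵢ₊₁`. -/
inductive Sat (Δ : SID Rel ar Pr pa) :
    Str Rel ar V → (ℕ → V) → SLR Rel ar Pr pa → Prop where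
  | emp {S : Str Rel ar V} {s : ℕ → V} : EmpS S → Sat Δ S s .emp
  | eq {S : Str Rel ar V} {s : ℕ → V} {x y : ℕ} :
      EmpS S → s x = s y → Sat Δ S s (.eq x y)
  | ne {S : Str Rel ar V} {s : ℕ → V} {x y : ℕ} :
      EmpS S → s x ≠ s y → Sat Δ S s (.ne x y)
  | rel {S : Str Rel ar V} {s : ℕ → V} {r : Rel} {a : Fin (ar r) → ℕ} :
      S.interp r = {fun i => s (a i)} → (∀ r', r' ≠ r → S.interp r' = ∅) →
      Sat Δ S s (.rel r a)
  | pred {S : Str Rel ar V} {s : ℕ → V} {A : Pr} {a : Fin (pa A) → ℕ}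
      {body : SLR Rel ar Pr pa} :
      body ∈ Δ.rules A →
      Sat Δ S (fun n => if h : n < pa A then s (a ⟨n, h⟩) else s n) body →
      Sat Δ S s (.pred A a)
  | star {S1 S2 : Str Rel ar V} {s : ℕ → V} {φ ψ : SLR Rel ar Pr pa} :
      LocDisj S1 S2 → Sat Δ S1 s φ → Sat Δ S2 s ψ →
      Sat Δ (S1.comp S2) s (.star φ ψ)
  | ex {S : Str Rel ar V} {s : ℕ → V} {x : ℕ} {φ : SLR Rel ar Pr pa} (u : V) :
      Sat Δ S (Function.update s x u) φ → Sat Δ S s (.ex x φ)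

/-- The set of `Δ`-models of a sentence (over universe `V`). -/
def SMod (Δ : SID Rel ar Pr pa) (φ : SLR Rel ar Pr pa) : Set (Str Rel ar V) :=
  { S | ∃ s : ℕ → V, Sat Δ S s φ }

/-- `IsSubst f φ φ'` holds iff `φ'` is obtained from `φ` by the capture-avoiding
substitution of `f x` for each free variable `x`, the bound variables being renamed
to avoid clashes. -/
inductive IsSubst : (ℕ → ℕ) → SLR Rel ar Pr pa → SLR Rel ar Pr pa → Prop where
  | emp {f : ℕ → ℕ} : IsSubst f .emp .emp
  | eq {f : ℕ → ℕ} {x y : ℕ} : IsSubst f (.eq x y) (.eq (f x) (f y))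
  | ne {f : ℕ → ℕ} {x y : ℕ} : IsSubst f (.ne x y) (.ne (f x) (f y))
  | rel {f : ℕ → ℕ} {r : Rel} {a : Fin (ar r) → ℕ} :
      IsSubst f (.rel r a) (.rel r (f ∘ a))
  | pred {f : ℕ → ℕ} {A : Pr} {a : Fin (pa A) → ℕ} :
      IsSubst f (.pred A a) (.pred A (f ∘ a))
  | star {f : ℕ → ℕ} {φ ψ φ' ψ' : SLR Rel ar Pr pa} :
      IsSubst f φ φ' → IsSubst f ψ ψ' → IsSubst f (.star φ ψ) (.star φ' ψ')
  | ex {f : ℕ → ℕ} {x z : ℕ} {φ φ' : SLR Rel ar Pr pa} :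
      (∀ y ∈ SLR.fv φ, y ≠ x → f y ≠ z) →
      IsSubst (Function.update f x z) φ φ' →
      IsSubst f (.ex x φ) (.ex z φ')

/-- One unfolding step: replace one predicate atom `A(y₁,…,yₙ)` by the body of a rule
for `A`, with the parameters substituted by `y₁,…,yₙ` (bound variables renamed to
avoid clashes). -/
inductive Step (Δ : SID Rel ar Pr pa) : SLR Rel ar Pr pa → SLR Rel ar Pr pa → Prop where
  | unfold {A : Pr} {a : Fin (pa A) → ℕ} {body ψ : SLR Rel ar Pr pa} :
      body ∈ Δ.rules A →
      IsSubst (fun n => if h : n < pa A then a ⟨n, h⟩ else n) body ψ →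
      Step Δ (.pred A a) ψ
  | starL {φ φ' ψ : SLR Rel ar Pr pa} : Step Δ φ φ' → Step Δ (.star φ ψ) (.star φ' ψ)
  | starR {φ ψ ψ' : SLR Rel ar Pr pa} : Step Δ ψ ψ' → Step Δ (.star φ ψ) (.star φ ψ')
  | exC {x : ℕ} {φ φ' : SLR Rel ar Pr pa} : Step Δ φ φ' → Step Δ (.ex x φ) (.ex x φ')

/-- `Δ`-unfolding: the reflexive-transitive closure of unfolding steps. -/
def Unfolds (Δ : SID Rel ar Pr pa) : SLR Rel ar Pr pa → SLR Rel ar Pr pa → Prop :=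
  Relation.ReflTransGen (Step Δ)

/-- `x = y` is a logical consequence of `ψ`. -/
def EqConseq (Δ : SID Rel ar Pr pa) (ψ : SLR Rel ar Pr pa) (x y : ℕ) : Prop :=
  ∀ (S : Str Rel ar V) (s : ℕ → V), Sat Δ S s ψ → s x = s y

/-- A store is canonical for `ψ` iff it identifies only variables that are equated as a
logical consequence of `ψ`. -/
def CanonicalStore (Δ : SID Rel ar Pr pa) (s : ℕ → V) (ψ : SLR Rel ar Pr pa) : Prop :=
  ∀ x ∈ ψ.fv, ∀ y ∈ ψ.fv, s x = s y → EqConseq (V := V) Δ ψ x y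

/-- `(S, d)` is a rich canonical `Δ`-model of `φ`: for some complete `Δ`-unfolding of
`φ` into a well-named predicate-free formula `χ` (i.e. of the form `∃x⃗.ψ` with `ψ` qpf,
up to hoisting of quantifiers) and some store canonical for the matrix `ψ`, the
structure `S` satisfies `ψ` and `d` records the disequalities of `ψ` under the store. -/
def RichCanonical (Δ : SID Rel ar Pr pa) (φ : SLR Rel ar Pr pa)
    (S : Str Rel ar V) (d : V → V → Prop) : Prop :=
  ∃ χ : SLR Rel ar Pr pa, Unfolds Δ φ χ ∧ χ.PredFree ∧ χ.WellNamed ∧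
    ∃ s : ℕ → V, CanonicalStore Δ s χ.matrix ∧ Sat Δ S s χ.matrix ∧
      ∀ u v : V, d u v ↔ ∃ x y : ℕ, s x = u ∧ s y = v ∧ χ.matrix.neOccurs x y

/-- The set of canonical `Δ`-models of `φ`. -/
def Canonical (Δ : SID Rel ar Pr pa) (φ : SLR Rel ar Pr pa) : Set (Str Rel ar V) :=
  { S | ∃ d, RichCanonical Δ φ S d }

/-- `S1` is a substructure of `S2`: its interpretation consists exactly of the tuples of
`S2` all of whose elements belong to the support of `S1`. -/
def Substr (S1 S2 : Str Rel ar V) : Prop :=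
  ∀ r, S1.interp r = { t ∈ S2.interp r | ∀ i, t i ∈ S1.supp }

/-- Two elements touch iff they occur in a common tuple. -/
def Touching (S : Str Rel ar V) (u v : V) : Prop :=
  ∃ (r : Rel) (t : Fin (ar r) → V), t ∈ S.interp r ∧ (∃ i, t i = u) ∧ ∃ j, t j = v

/-- A structure is connected iff any two support elements are joined by a path of
pairwise overlapping tuples. -/
def ConnectedS (S : Str Rel ar V) : Prop :=
  ∀ u ∈ S.supp, ∀ v ∈ S.supp, Relation.ReflTransGen (Touching S) u v

/-- `S1` is a maximally connected substructure of `S2`. -/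
def MaxConn (S1 S2 : Str Rel ar V) : Prop :=
  Substr S1 S2 ∧ ConnectedS S1 ∧
    ∀ S1' : Str Rel ar V, Substr S1' S2 → ConnectedS S1' → Substr S1 S1' → S1 = S1'

/-- The set of maximally connected substructures of a structure. -/
def split (S : Str Rel ar V) : Set (Str Rel ar V) := { S' | MaxConn S' S }

/-- `split`, lifted to sets of structures. -/
def splitSet (𝒮 : Set (Str Rel ar V)) : Set (Str Rel ar V) := ⋃ S ∈ 𝒮, split S

/-- The smallest equivalence relation containing `R`. -/
def EqvOf (R : V → V → Prop) (a b : V) : Prop :=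
  ∀ E : V → V → Prop, Equivalence E → (∀ x y, R x y → E x y) → E a b

/-- An equivalence relation is compatible with a structure iff any two distinct tuples of
the interpretation of a relation symbol differ at some position modulo the relation. -/
def CompatibleE (S : Str Rel ar V) (E : V → V → Prop) : Prop :=
  ∀ r, ∀ t1 ∈ S.interp r, ∀ t2 ∈ S.interp r, t1 ≠ t2 → ∃ i, ¬ E (t1 i) (t2 i)

/-- The image of a structure under a map on elements. -/
def mapStr (h : V → V) (S : Str Rel ar V) : Str Rel ar V where
  interp r := (fun t => h ∘ t) '' S.interp r
  finite_interp r := (S.finite_interp r).image _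
  finite_active := by
    refine S.finite_active.subset ?_
    intro r hr
    simp only [Set.mem_setOf_eq, ne_eq] at hr ⊢
    intro h0
    exact hr (by rw [h0, Set.image_empty])

/-- `S'` is (a copy over `V` of) the quotient of `S` by the equivalence relation `E`. -/
def QuotBy (S : Str Rel ar V) (E : V → V → Prop) (S' : Str Rel ar V) : Prop :=
  ∃ h : V → V, (∀ u ∈ S.supp, ∀ v ∈ S.supp, (E u v ↔ h u = h v)) ∧ S' = mapStr h S

/-- `S'` is an isomorphic copy of `S` (over the same universe `V`). -/
def IsoCopy (S S' : Str Rel ar V) : Prop :=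
  ∃ h : V → V, Set.InjOn h S.supp ∧ S' = mapStr h S

/-- A matching: a set of pairs such that distinct pairs share no element. -/
def IsMatching (M : Set (V × V)) : Prop :=
  ∀ p ∈ M, ∀ q ∈ M, p ≠ q → ({p.1, p.2} ∩ {q.1, q.2} : Set V) = ∅

/-- The set of internal fusions of a structure: quotients by compatible equivalence
relations (up to isomorphism). -/
def IntFusion (S : Str Rel ar V) : Set (Str Rel ar V) :=
  { S' | ∃ E : V → V → Prop, Equivalence E ∧ CompatibleE S E ∧ QuotBy S E S' }

/-- Internal fusions of members of a set of structures. -/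
def ifSet (𝒮 : Set (Str Rel ar V)) : Set (Str Rel ar V) := ⋃ S ∈ 𝒮, IntFusion S

/-- Internal fusions of a rich canonical model: quotients by compatible equivalence
relations that do not violate the disequality relation `d`. -/
def SIntFusion (S : Str Rel ar V) (d : V → V → Prop) : Set (Str Rel ar V) :=
  { S' | ∃ E : V → V → Prop, Equivalence E ∧ CompatibleE S E ∧
      (∀ u v, d u v → ¬ E u v) ∧ QuotBy S E S' }

/-- External fusions of two structures: quotients of the composition of disjoint
isomorphic copies by the smallest equivalence relation containing a nonempty matching
between supports that is compatible with the composition. -/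
def ExtFusion (S1 S2 : Str Rel ar V) : Set (Str Rel ar V) :=
  { S' | ∃ (S1' S2' : Str Rel ar V) (M : Set (V × V)),
      IsoCopy S1 S1' ∧ IsoCopy S2 S2' ∧ S1'.supp ∩ S2'.supp = ∅ ∧
      M.Nonempty ∧ IsMatching M ∧ (∀ p ∈ M, p.1 ∈ S1'.supp ∧ p.2 ∈ S2'.supp) ∧
      CompatibleE (S1'.comp S2') (EqvOf fun a b => (a, b) ∈ M) ∧
      QuotBy (S1'.comp S2') (EqvOf fun a b => (a, b) ∈ M) S' }

/-- Single-pair external fusions: external fusions whose matching is a single pair. -/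
def ExtFusion1 (S1 S2 : Str Rel ar V) : Set (Str Rel ar V) :=
  { S' | ∃ (S1' S2' : Str Rel ar V) (M : Set (V × V)),
      IsoCopy S1 S1' ∧ IsoCopy S2 S2' ∧ S1'.supp ∩ S2'.supp = ∅ ∧
      (∃ p : V × V, M = {p}) ∧ IsMatching M ∧
      (∀ p ∈ M, p.1 ∈ S1'.supp ∧ p.2 ∈ S2'.supp) ∧
      CompatibleE (S1'.comp S2') (EqvOf fun a b => (a, b) ∈ M) ∧
      QuotBy (S1'.comp S2') (EqvOf fun a b => (a, b) ∈ M) S' }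

/-- Closure of a set of structures under external fusions (structures being identified
up to isomorphism). -/
inductive efStar (𝒮 : Set (Str Rel ar V)) : Str Rel ar V → Prop where
  | base {S : Str Rel ar V} : S ∈ 𝒮 → efStar 𝒮 S
  | iso {S S' : Str Rel ar V} : efStar 𝒮 S → IsoCopy S S' → efStar 𝒮 S'
  | fuse {S1 S2 S : Str Rel ar V} :
      efStar 𝒮 S1 → efStar 𝒮 S2 → S ∈ ExtFusion S1 S2 → efStar 𝒮 S

def efStarSet (𝒮 : Set (Str Rel ar V)) : Set (Str Rel ar V) := { S | efStar 𝒮 S }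

/-- Closure of a set of structures under single-pair external fusions. -/
inductive ef1Star (𝒮 : Set (Str Rel ar V)) : Str Rel ar V → Prop where
  | base {S : Str Rel ar V} : S ∈ 𝒮 → ef1Star 𝒮 S
  | iso {S S' : Str Rel ar V} : ef1Star 𝒮 S → IsoCopy S S' → ef1Star 𝒮 S'
  | fuse {S1 S2 S : Str Rel ar V} :
      ef1Star 𝒮 S1 → ef1Star 𝒮 S2 → S ∈ ExtFusion1 S1 S2 → ef1Star 𝒮 S

def ef1StarSet (𝒮 : Set (Str Rel ar V)) : Set (Str Rel ar V) := { S | ef1Star 𝒮 S }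

/-- Closure of a set of structures under both internal and external fusions. -/
inductive iefStar (𝒮 : Set (Str Rel ar V)) : Str Rel ar V → Prop where
  | base {S : Str Rel ar V} : S ∈ 𝒮 → iefStar 𝒮 S
  | iso {S S' : Str Rel ar V} : iefStar 𝒮 S → IsoCopy S S' → iefStar 𝒮 S'
  | fuse {S1 S2 S : Str Rel ar V} :
      iefStar 𝒮 S1 → iefStar 𝒮 S2 → S ∈ ExtFusion S1 S2 → iefStar 𝒮 S
  | intf {S1 S : Str Rel ar V} : iefStar 𝒮 S1 → S ∈ IntFusion S1 → iefStar 𝒮 S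

def iefStarSet (𝒮 : Set (Str Rel ar V)) : Set (Str Rel ar V) := { S | iefStar 𝒮 S }

/-- The color of an element: the set of relation symbols whose interpretation contains
the constant tuple at this element. -/
def color (S : Str Rel ar V) (u : V) : Set Rel :=
  { r : Rel | (fun _ => u) ∈ S.interp r }

/-- The multiplicity of a color in the multiset color abstraction of a structure. -/
noncomputable def colorMult (S : Str Rel ar V) (C : Set Rel) : ℕ :=
  {u ∈ S.supp | color S u = C}.ncard

/-- The `k`-multiset color abstraction of a structure: the sub-multisets of cardinality
at most `k` of the multiset of colors of its support elements. -/
noncomputable def MkOf (k : ℕ) (S : Str Rel ar V) : Set (Multiset (Set Rel)) :=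
  { M | Multiset.card M ≤ k ∧
      ∀ C : Set Rel, @Multiset.count _ (Classical.decEq _) C M ≤ colorMult S C }

/-- The `k`-multiset color abstraction, lifted to sets of structures. -/
noncomputable def MkSet (k : ℕ) (𝒮 : Set (Str Rel ar V)) : Set (Multiset (Set Rel)) :=
  ⋃ S ∈ 𝒮, MkOf k S

/-- A set of structures conforms to an RGB color scheme iff (1) in any member, if some
support element has a red color then all other support elements have blue colors, and
(2) in any external fusion of members, every green color occurs at most twice. -/
def Conforms (𝒮 : Set (Str Rel ar V)) (P : RGB Rel) : Prop :=
  (∀ S ∈ 𝒮, ∀ u ∈ S.supp, color S u ∈ P.red →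
      ∀ v ∈ S.supp, v ≠ u → color S v ∈ P.blue) ∧
  (∀ S ∈ efStarSet 𝒮, ∀ C ∈ P.green, colorMult S C ≤ 2)

/-- Type `R` structures: only blue and red colors, with exactly one red element. -/
def TypeR (P : RGB Rel) (S : Str Rel ar V) : Prop :=
  (∀ u ∈ S.supp, color S u ∈ P.blue ∨ color S u ∈ P.red) ∧
  {u ∈ S.supp | color S u ∈ P.red}.ncard = 1

/-- Type `G` structures: only blue and green colors, with at least one green element. -/
def TypeG (P : RGB Rel) (S : Str Rel ar V) : Prop :=
  (∀ u ∈ S.supp, color S u ∈ P.blue ∨ color S u ∈ P.green) ∧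
  {u ∈ S.supp | color S u ∈ P.green}.Nonempty

/-- Type `B` structures: only blue colors. -/
def TypeB (P : RGB Rel) (S : Str Rel ar V) : Prop :=
  ∀ u ∈ S.supp, color S u ∈ P.blue

namespace SID

/-- The set of predicate symbols occurring in an SID. -/
def predsOf (Δ : SID Rel ar Pr pa) : Set Pr :=
  {A | Δ.rules A ≠ ∅} ∪ ⋃ A, ⋃ φ ∈ Δ.rules A, SLR.preds φ

/-- The set of relation symbols occurring in an SID. -/
def relsOf (Δ : SID Rel ar Pr pa) : Set Rel :=
  ⋃ A, ⋃ φ ∈ Δ.rules A, SLR.rels φ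

/-- The number of predicate symbols occurring in an SID. -/
noncomputable def Pcount (Δ : SID Rel ar Pr pa) : ℕ := Δ.predsOf.ncard

/-- The number of relation symbols occurring in an SID. -/
noncomputable def Rcount (Δ : SID Rel ar Pr pa) : ℕ := Δ.relsOf.ncard

/-- The maximum number of variables (free or existentially quantified) occurring in a
rule of the SID. -/
noncomputable def maxvar (Δ : SID Rel ar Pr pa) : ℕ :=
  sSup { n | ∃ A, ∃ φ ∈ Δ.rules A, n = ({x | x < pa A} ∪ SLR.vars φ).ncard }

/-- The maximum number of predicate atoms occurring in a rule of the SID. -/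
noncomputable def maxpredatoms (Δ : SID Rel ar Pr pa) : ℕ :=
  sSup { n | ∃ A, ∃ φ ∈ Δ.rules A, n = SLR.npred φ }

/-- The maximum number of relation atoms occurring in a rule of the SID. -/
noncomputable def maxrelatoms (Δ : SID Rel ar Pr pa) : ℕ :=
  sSup { n | ∃ A, ∃ φ ∈ Δ.rules A, n = SLR.nrel φ }

/-- The maximum arity of a relation symbol occurring in the SID. -/
noncomputable def maxrelarity (Δ : SID Rel ar Pr pa) : ℕ :=
  sSup { n | ∃ r ∈ Δ.relsOf, n = ar r }

/-- The maximum arity of a predicate symbol occurring in the SID. -/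
noncomputable def maxpredarity (Δ : SID Rel ar Pr pa) : ℕ :=
  sSup { n | ∃ A ∈ Δ.predsOf, n = pa A }

/-- An SID is equality-free iff all its rules are equality-free. -/
def EqFree (Δ : SID Rel ar Pr pa) : Prop :=
  ∀ A, ∀ φ ∈ Δ.rules A, SLR.EqFreeF φ

end SID

/-- An SID is all-satisfiable for a nullary predicate `A` iff every predicate-free
outcome of a complete unfolding of `A` is satisfiable. -/
def AllSat (Δ : SID Rel ar Pr pa) (A : Pr) : Prop :=
  ∀ χ : SLR Rel ar Pr pa, Unfolds Δ (natom A) χ → χ.PredFree →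
    ∃ (S : Str Rel ar V) (s : ℕ → V), Sat Δ S s χ

/-- An SID is expandable for a nullary predicate `A`: any finite family of pairwise
disjoint canonical models embeds, as a substructure, into a rich canonical model, in a
way that neither disequalities nor overlapping tuples connect two distinct members. -/
def Expandable (Δ : SID Rel ar Pr pa) (A : Pr) : Prop :=
  ∀ (n : ℕ) (Ss : Fin n → Str Rel ar V),
    (∀ i, Ss i ∈ Canonical (V := V) Δ (natom A)) →
    (∀ i j, i ≠ j → (Ss i).supp ∩ (Ss j).supp = ∅) →
    ∃ (S : Str Rel ar V) (d : V → V → Prop),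
      RichCanonical Δ (natom A) S d ∧
      Substr (bigComp Ss) S ∧
      (∀ i j : Fin n, i < j → ∀ u ∈ (Ss i).supp, ∀ v ∈ (Ss j).supp, ¬ d u v) ∧
      ¬ ∃ (r : Rel) (t1 t2 : Fin (ar r) → V) (i j : Fin n),
          t1 ∈ S.interp r ∧ t2 ∈ S.interp r ∧ i < j ∧
          (∃ k, t1 k ∈ (Ss i).supp) ∧ (∃ k, t2 k ∈ (Ss j).supp) ∧ ∃ k l, t1 k = t2 l

/-- The set of structures obtained by internal fusion of rich canonical `Δ`-models. -/
def sifSet (Δ : SID Rel ar Pr pa) (φ : SLR Rel ar Pr pa) : Set (Str Rel ar V) :=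
  { S' | ∃ (S : Str Rel ar V) (d : V → V → Prop),
      RichCanonical Δ φ S d ∧ S' ∈ SIntFusion S d }

end Defs2

end SLRTW

namespace SLRTW

/-! ### Auxiliary infrastructure -/

section Aux

open Classical

variable {Rel : Type} {ar : Rel → ℕ} {V : Type}

theorem Str.ext' {S1 S2 : Str Rel ar V} (h : ∀ r, S1.interp r = S2.interp r) :
    S1 = S2 := by
  cases S1; cases S2
  simp only [Str.mk.injEq]
  exact funext h

theorem mem_supp_of_tuple {S : Str Rel ar V} {r : Rel} {t : Fin (ar r) → V}
    (ht : t ∈ S.interp r) (i : Fin (ar r)) : t i ∈ S.supp :=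
  ⟨r, t, ht, i, rfl⟩

theorem supp_finite (S : Str Rel ar V) : S.supp.Finite := by
  have : S.supp ⊆ ⋃ r ∈ {r : Rel | S.interp r ≠ ∅}, ⋃ t ∈ S.interp r, Set.range t := by
    rintro u ⟨r, t, ht, i, rfl⟩
    refine Set.mem_biUnion ?_ (Set.mem_biUnion ht ⟨i, rfl⟩)
    simp only [Set.mem_setOf_eq, ne_eq]
    intro h; rw [h] at ht; exact ht
  refine Set.Finite.subset ?_ this
  refine Set.Finite.biUnion S.finite_active fun r _ => ?_
  exact Set.Finite.biUnion (S.finite_interp r) fun t _ => Set.finite_range t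

theorem interp_mapStr (f : V → V) (S : Str Rel ar V) (r : Rel) :
    (mapStr f S).interp r = (fun t => f ∘ t) '' S.interp r := rfl

theorem supp_mapStr (f : V → V) (S : Str Rel ar V) :
    (mapStr f S).supp = f '' S.supp := by
  ext u
  constructor
  · rintro ⟨r, t, ⟨s, hs, rfl⟩, i, rfl⟩
    exact ⟨s i, mem_supp_of_tuple hs i, rfl⟩
  · rintro ⟨v, ⟨r, t, ht, i, rfl⟩, rfl⟩
    exact ⟨r, f ∘ t, ⟨t, ht, rfl⟩, i, rfl⟩

theorem mapStr_congr {f g : V → V} {S : Str Rel ar V}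
    (h : ∀ a ∈ S.supp, f a = g a) : mapStr f S = mapStr g S := by
  refine Str.ext' fun r => ?_
  ext t
  constructor <;> rintro ⟨s, hs, rfl⟩ <;> refine ⟨s, hs, ?_⟩ <;>
    funext i <;> simp only [Function.comp_apply]
  · exact (h (s i) (mem_supp_of_tuple hs i)).symm
  · exact h (s i) (mem_supp_of_tuple hs i)

theorem mapStr_mapStr (f g : V → V) (S : Str Rel ar V) :
    mapStr f (mapStr g S) = mapStr (f ∘ g) S := by
  refine Str.ext' fun r => ?_
  simp only [interp_mapStr, ← Set.image_comp]
  rfl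

theorem mapStr_id (S : Str Rel ar V) : mapStr id S = S := by
  refine Str.ext' fun r => ?_
  simp [interp_mapStr]

theorem mapStr_comp_str (f : V → V) (S1 S2 : Str Rel ar V) :
    mapStr f (S1.comp S2) = (mapStr f S1).comp (mapStr f S2) := by
  refine Str.ext' fun r => ?_
  simp only [interp_mapStr, Str.comp, Set.image_union]

theorem supp_comp (S1 S2 : Str Rel ar V) :
    (S1.comp S2).supp = S1.supp ∪ S2.supp := by
  ext u
  constructor
  · rintro ⟨r, t, ht, i, rfl⟩
    rcases ht with ht | ht
    · exact Or.inl ⟨r, t, ht, i, rfl⟩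
    · exact Or.inr ⟨r, t, ht, i, rfl⟩
  · rintro (⟨r, t, ht, i, rfl⟩ | ⟨r, t, ht, i, rfl⟩)
    · exact ⟨r, t, Or.inl ht, i, rfl⟩
    · exact ⟨r, t, Or.inr ht, i, rfl⟩

theorem touching_symm {S : Str Rel ar V} {u v : V} (h : Touching S u v) :
    Touching S v u := by
  obtain ⟨r, t, ht, hi, hj⟩ := h
  exact ⟨r, t, ht, hj, hi⟩

/-- Fresh injections: an injection on a finite set whose image avoids a finite set. -/
theorem exists_fresh_inj [Infinite V] (A B : Set V) (hA : A.Finite) (hB : B.Finite) :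
    ∃ β : V → V, Set.InjOn β A ∧ (β '' A) ∩ B = ∅ := by
  classical
  have hinf : (A ∪ B)ᶜ.Infinite := (hA.union hB).infinite_compl
  let f := hinf.natEmbedding
  -- enumerate A
  have : ∃ g : V → ℕ, Set.InjOn g A := by
    obtain ⟨n, ⟨e⟩⟩ := hA.exists_equiv_fin
    refine ⟨fun a => if h : a ∈ A then (e ⟨a, h⟩ : ℕ) else 0, ?_⟩
    intro a ha b hb hab
    simp only [dif_pos ha, dif_pos hb] at hab
    have : e ⟨a, ha⟩ = e ⟨b, hb⟩ := Fin.ext hab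
    exact Subtype.ext_iff.mp (e.injective this)
  obtain ⟨g, hg⟩ := this
  refine ⟨fun a => (f (g a) : V), ?_, ?_⟩
  · intro a ha b hb hab
    exact hg ha hb (f.injective (Subtype.ext hab))
  · apply Set.eq_empty_iff_forall_notMem.mpr
    rintro v ⟨⟨a, _, rfl⟩, hvB⟩
    exact (f (g a)).2 (Or.inr hvB)

end Aux
section Aux2

open Classical

variable {Rel : Type} {ar : Rel → ℕ} {V : Type}

/-- In-set chain relation for connectivity of induced subgraphs. -/
def chainRel {ι : Type} (G : SimpleGraph ι) (A : Set ι) (p q : ι) : Prop :=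
  p ∈ A ∧ q ∈ A ∧ G.Adj p q

theorem connected_induce_of_chain {ι : Type} (G : SimpleGraph ι) (A : Set ι)
    (hne : A.Nonempty)
    (hch : ∀ a ∈ A, ∀ b ∈ A, Relation.ReflTransGen (chainRel G A) a b) :
    (SimpleGraph.induce A G).Connected := by
  haveI : Nonempty A := ⟨⟨hne.choose, hne.choose_spec⟩⟩
  refine SimpleGraph.Connected.mk ?_
  rintro ⟨a, ha⟩ ⟨b, hb⟩
  have h := hch a ha b hb
  clear hch
  induction h with
  | refl => exact SimpleGraph.Reachable.refl _
  | @tail c d hcd hstep ih =>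
      obtain ⟨hc, hd, hadj⟩ := hstep
      have ih' := ih
      -- need membership of c in A : from hstep
      refine SimpleGraph.Reachable.trans (ih' hc) ?_
      exact SimpleGraph.Adj.reachable (by exact hadj : (SimpleGraph.induce A G).Adj ⟨c, hc⟩ ⟨d, hd⟩)

theorem chain_of_connected_induce {ι : Type} (G : SimpleGraph ι) (A : Set ι)
    (h : (SimpleGraph.induce A G).Connected) :
    ∀ a ∈ A, ∀ b ∈ A, Relation.ReflTransGen (chainRel G A) a b := by
  intro a ha b hb
  have hr : (SimpleGraph.induce A G).Reachable ⟨a, ha⟩ ⟨b, hb⟩ := h.preconnected _ _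
  obtain ⟨w⟩ := hr
  have : ∀ (x y : A) (_ : (SimpleGraph.induce A G).Walk x y),
      Relation.ReflTransGen (chainRel G A) x.val y.val := by
    intro x y w
    induction w with
    | nil => exact Relation.ReflTransGen.refl
    | @cons u v z hadj p ih =>
        refine Relation.ReflTransGen.head ⟨u.2, v.2, hadj⟩ ih
  exact this _ _ w

theorem chainRel_mono {ι : Type} (G G' : SimpleGraph ι) (A B : Set ι)
    (hAB : A ⊆ B) (hG : ∀ p q, G.Adj p q → G'.Adj p q) {a b : ι}
    (h : Relation.ReflTransGen (chainRel G A) a b) :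
    Relation.ReflTransGen (chainRel G' B) a b :=
  Relation.ReflTransGen.mono (fun p q ⟨hp, hq, hadj⟩ => ⟨hAB hp, hAB hq, hG p q hadj⟩) _ _ h

/-- Every structure has a tree decomposition (a single bag with the whole support). -/
noncomputable def trivDecomp (S : Str Rel ar V) : TreeDecomp S where
  ι := Unit
  instFin := inferInstance
  G := ⊥
  isTree := by
    constructor
    · haveI : Nonempty Unit := ⟨()⟩
      refine SimpleGraph.Connected.mk fun a b => ?_
      cases a; cases b; exact SimpleGraph.Reachable.refl _
    · intro v w hw
      cases hw with
      | mk hc _ =>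
          cases w with
          | nil => exact hc.ne_nil rfl
          | cons h p => exact absurd h (by simp)
  bag := fun _ => (supp_finite S).toFinset
  bag_cover := by
    intro r t ht
    exact ⟨(), fun i => (Set.Finite.mem_toFinset _).mpr (mem_supp_of_tuple ht i)⟩
  bag_conn := by
    intro u hu
    refine connected_induce_of_chain _ _ ⟨(), (Set.Finite.mem_toFinset _).mpr hu⟩ ?_
    intro a ha b hb
    cases a; cases b; exact Relation.ReflTransGen.refl

theorem tw_le_width {S : Str Rel ar V} (T : TreeDecomp S) : tw S ≤ T.width :=
  Nat.sInf_le ⟨T, rfl⟩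

theorem exists_decomp_tw (S : Str Rel ar V) : ∃ T : TreeDecomp S, T.width = tw S :=
  Nat.sInf_mem (⟨(trivDecomp S).width, trivDecomp S, rfl⟩ :
    Set.Nonempty {w | ∃ T : TreeDecomp S, T.width = w})

/-- The fundamental "minor" lemma: if every tuple of `S'` is the `F`-image of a tuple
of `X` with entries in `D`, and the fibers of `F` over `D` are `Touching`-connected,
then `tw S' ≤ tw X`. -/
theorem tw_minor (X S' : Str Rel ar V) (F : V → V) (D : Set V) (hD : D ⊆ X.supp)
    (cover : ∀ r, ∀ t' ∈ S'.interp r, ∃ t ∈ X.interp r,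
      (∀ i, t i ∈ D) ∧ (fun i => F (t i)) = t')
    (fibcon : ∀ z ∈ S'.supp, ∀ a, a ∈ D → F a = z → ∀ b, b ∈ D → F b = z →
      Relation.ReflTransGen
        (fun c d => c ∈ D ∧ d ∈ D ∧ F c = z ∧ F d = z ∧ Touching X c d) a b) :
    tw S' ≤ tw X := by
  classical
  obtain ⟨T, hT⟩ := exists_decomp_tw X
  have hbag : ∀ n : T.ι, ∀ c ∈ T.bag n, True := fun _ _ _ => trivial
  -- new decomposition
  let bag' : T.ι → Finset V := fun n => ((T.bag n).filter (· ∈ D)).image F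
  have hmem : ∀ (n : T.ι) (z : V), z ∈ bag' n ↔ ∃ c ∈ T.bag n, c ∈ D ∧ F c = z := by
    intro n z
    simp only [bag', Finset.mem_image, Finset.mem_filter]
    constructor
    · rintro ⟨c, ⟨h1, h2⟩, rfl⟩; exact ⟨c, h1, h2, rfl⟩
    · rintro ⟨c, h1, h2, rfl⟩; exact ⟨c, ⟨h1, h2⟩, rfl⟩
  -- subtrees intersect when touching
  have hT_touch : ∀ c d : V, Touching X c d → ∃ n : T.ι, c ∈ T.bag n ∧ d ∈ T.bag n := by
    rintro c d ⟨r, t, ht, ⟨i, rfl⟩, ⟨j, rfl⟩⟩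
    obtain ⟨n, hn⟩ := T.bag_cover r t ht
    exact ⟨n, hn i, hn j⟩
  let T' : TreeDecomp S' :=
    { ι := T.ι
      instFin := T.instFin
      G := T.G
      isTree := T.isTree
      bag := bag'
      bag_cover := by
        intro r t' ht'
        obtain ⟨t, ht, htD, hFt⟩ := cover r t' ht'
        obtain ⟨n, hn⟩ := T.bag_cover r t ht
        refine ⟨n, fun i => ?_⟩
        rw [← hFt]
        exact (hmem n _).mpr ⟨t i, hn i, htD i, rfl⟩
      bag_conn := by
        intro z hz
        -- the node set
        have hNsub : ∀ c, c ∈ D → F c = z →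
            {n : T.ι | c ∈ T.bag n} ⊆ {n : T.ι | z ∈ bag' n} := by
          intro c hc hFc n hn
          exact (hmem n z).mpr ⟨c, hn, hc, hFc⟩
        -- nonempty
        obtain ⟨r, t', ht', i, hti⟩ := hz
        obtain ⟨t, ht, htD, hFt⟩ := cover r t' ht'
        obtain ⟨n0, hn0⟩ := T.bag_cover r t ht
        have hzn0 : z ∈ bag' n0 := by
          refine (hmem n0 z).mpr ⟨t i, hn0 i, htD i, ?_⟩
          rw [← hti, ← hFt]
        refine connected_induce_of_chain _ _ ⟨n0, hzn0⟩ ?_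
        intro n1 hn1 n2 hn2
        obtain ⟨c1, hc1b, hc1D, hc1F⟩ := (hmem n1 z).mp hn1
        obtain ⟨c2, hc2b, hc2D, hc2F⟩ := (hmem n2 z).mp hn2
        -- chain from fiber connectivity
        have hfib := fibcon z ⟨r, t', ht', i, hti⟩ c1 hc1D hc1F c2 hc2D hc2F
        -- first, chains within a single subtree
        have hsub : ∀ c, c ∈ D → F c = z → ∀ m1 ∈ {n : T.ι | c ∈ T.bag n},
            ∀ m2 ∈ {n : T.ι | c ∈ T.bag n},
            Relation.ReflTransGen (chainRel T.G {n : T.ι | z ∈ bag' n}) m1 m2 := by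
          intro c hc hFc m1 hm1 m2 hm2
          have hconn := T.bag_conn c (hD hc)
          have := chain_of_connected_induce _ _ hconn m1 hm1 m2 hm2
          exact chainRel_mono _ _ _ _ (hNsub c hc hFc) (fun _ _ h => h) this
        -- induct along the fiber chain
        have main : ∀ c2', (Relation.ReflTransGen
            (fun c d => c ∈ D ∧ d ∈ D ∧ F c = z ∧ F d = z ∧ Touching X c d) c1 c2') →
            ∀ m ∈ {n : T.ι | c2' ∈ T.bag n}, (c2' ∈ D ∧ F c2' = z) →
            Relation.ReflTransGen (chainRel T.G {n : T.ι | z ∈ bag' n}) n1 m := by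
          intro c2' hchain
          induction hchain with
          | refl => intro m hm _; exact hsub c1 hc1D hc1F n1 hc1b m hm
          | @tail c d hcd hstep ih =>
              intro m hm hdz
              obtain ⟨hcD, hdD, hcF, hdF, htouch⟩ := hstep
              obtain ⟨nm, hnm1, hnm2⟩ := hT_touch c d htouch
              refine Relation.ReflTransGen.trans (ih nm hnm1 ⟨hcD, hcF⟩) ?_
              exact hsub d hdD hdF nm hnm2 m hm
        exact main c2 hfib n2 hc2b ⟨hc2D, hc2F⟩ }
  have hw : T'.width ≤ T.width := by
    unfold TreeDecomp.width
    have : ∀ n : T'.ι, (T'.bag n).card ≤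
        (Finset.univ.sup fun n : T.ι => (T.bag n).card) := by
      intro n
      calc (T'.bag n).card ≤ (T.bag n).card := by
            refine le_trans (Finset.card_image_le) (Finset.card_filter_le _ _)
          _ ≤ _ := Finset.le_sup (f := fun n : T.ι => (T.bag n).card) (Finset.mem_univ n)
    exact Nat.sub_le_sub_right (Finset.sup_le fun n _ => this n) 1
  calc tw S' ≤ T'.width := tw_le_width T'
    _ ≤ T.width := hw
    _ = tw X := hT

end Aux2
section Aux3

open Classical

variable {Rel : Type} {ar : Rel → ℕ} {V : Type}

theorem eqvOf_gen {R : V → V → Prop} {a b : V} (h : R a b) : EqvOf R a b :=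
  fun _ _ hR => hR a b h

theorem eqvOf_matching {M : Set (V × V)} (hM : IsMatching M) (a b : V) :
    EqvOf (fun x y => (x, y) ∈ M) a b ↔ a = b ∨ (a, b) ∈ M ∨ (b, a) ∈ M := by
  have hdisj : ∀ p ∈ M, ∀ q ∈ M, p ≠ q →
      ∀ e, ¬(( e = p.1 ∨ e = p.2) ∧ (e = q.1 ∨ e = q.2)) := by
    intro p hp q hq hpq e ⟨h1, h2⟩
    have := hM p hp q hq hpq
    have he : e ∈ ({p.1, p.2} ∩ {q.1, q.2} : Set V) := by
      constructor
      · rcases h1 with h | h <;> simp [h]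
      · rcases h2 with h | h <;> simp [h]
    rw [this] at he
    exact he
  constructor
  · intro h
    refine h (fun x y => x = y ∨ (x, y) ∈ M ∨ (y, x) ∈ M) ?_ ?_
    · constructor
      · intro x; exact Or.inl rfl
      · rintro x y (rfl | h | h)
        · exact Or.inl rfl
        · exact Or.inr (Or.inr h)
        · exact Or.inr (Or.inl h)
      · rintro x y z (rfl | h1 | h1) h2
        · exact h2
        · rcases h2 with rfl | h2 | h2
          · exact Or.inr (Or.inl h1)
          · -- (x,y) ∈ M, (y,z) ∈ M
            by_cases hpq : (x, y) = (y, z)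
            · obtain ⟨h3, h4⟩ := Prod.mk.injEq .. ▸ hpq
              exact Or.inl (h3.trans h4)
            · exact absurd ⟨Or.inr rfl, Or.inl rfl⟩ (hdisj _ h1 _ h2 hpq y)
          · -- (x,y) ∈ M, (z,y) ∈ M
            by_cases hpq : (x, y) = (z, y)
            · obtain ⟨h3, h4⟩ := Prod.mk.injEq .. ▸ hpq
              exact Or.inl h3
            · exact absurd ⟨Or.inr rfl, Or.inr rfl⟩ (hdisj _ h1 _ h2 hpq y)
        · rcases h2 with rfl | h2 | h2
          · exact Or.inr (Or.inr h1)
          · -- (y,x) ∈ M, (y,z) ∈ M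
            by_cases hpq : (y, x) = (y, z)
            · obtain ⟨h3, h4⟩ := Prod.mk.injEq .. ▸ hpq
              exact Or.inl h4
            · exact absurd ⟨Or.inl rfl, Or.inl rfl⟩ (hdisj _ h1 _ h2 hpq y)
          · -- (y,x) ∈ M, (z,y) ∈ M
            by_cases hpq : (y, x) = (z, y)
            · obtain ⟨h3, h4⟩ := Prod.mk.injEq .. ▸ hpq
              exact Or.inl (h4.trans h3)
            · exact absurd ⟨Or.inl rfl, Or.inr rfl⟩ (hdisj _ h1 _ h2 hpq y)
    · intro x y h; exact Or.inr (Or.inl h)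
  · rintro (rfl | h | h)
    · intro E hE _; exact hE.refl a
    · exact eqvOf_gen h
    · intro E hE hR; exact hE.symm (hR b a h)

/-- A compatible quotient map. -/
def CompatH (W : Str Rel ar V) (h : V → V) : Prop :=
  ∀ r, ∀ t1 ∈ W.interp r, ∀ t2 ∈ W.interp r, t1 ≠ t2 → ∃ i, h (t1 i) ≠ h (t2 i)

theorem tuple_ne_iff {n : ℕ} {t1 t2 : Fin n → V} (h : t1 ≠ t2) : ∃ i, t1 i ≠ t2 i := by
  by_contra hc
  push_neg at hc
  exact h (funext hc)

theorem compatH_id (W : Str Rel ar V) : CompatH W id := by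
  intro r t1 h1 t2 h2 hne
  obtain ⟨i, hi⟩ := tuple_ne_iff hne
  exact ⟨i, hi⟩

end Aux3
section Aux4

open Classical

variable {Rel : Type} {ar : Rel → ℕ} {V : Type}

theorem tw_le_of_interp_subset (S1 S2 : Str Rel ar V)
    (h : ∀ r, S1.interp r ⊆ S2.interp r) : tw S1 ≤ tw S2 := by
  refine tw_minor S2 S1 id S2.supp le_rfl.subset ?_ ?_
  · intro r t' ht'
    exact ⟨t', h r ht', fun i => mem_supp_of_tuple (h r ht') i, rfl⟩
  · intro z _ a _ ha b _ hb
    simp only [id] at ha hb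
    have : a = b := ha.trans hb.symm
    subst this
    exact Relation.ReflTransGen.refl

theorem tw_mapStr_le (f : V → V) (S : Str Rel ar V) (hf : Set.InjOn f S.supp) :
    tw (mapStr f S) ≤ tw S := by
  refine tw_minor S (mapStr f S) f S.supp le_rfl.subset ?_ ?_
  · rintro r t' ⟨s, hs, rfl⟩
    exact ⟨s, hs, fun i => mem_supp_of_tuple hs i, rfl⟩
  · intro z _ a haD ha b hbD hb
    have : a = b := hf haD hbD (ha.trans hb.symm)
    rw [this]

/-- Commutation: every member of the internal/external closure is a compatible
quotient of a member of the external closure. -/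
theorem iefStar_quot [Infinite V] (har : ∀ r, 1 ≤ ar r) (C : Set (Str Rel ar V)) :
    ∀ S : Str Rel ar V, iefStar C S → ∃ (W : Str Rel ar V) (h : V → V),
      efStar C W ∧ CompatH W h ∧ S = mapStr h W := by
  intro S hS
  induction hS with
  | @base S h => exact ⟨S, id, .base h, compatH_id _, (mapStr_id _).symm⟩
  | @iso S S' h1 hiso ih =>
      obtain ⟨W, h, hW, hch, rfl⟩ := ih
      obtain ⟨f, hfinj, rfl⟩ := hiso
      refine ⟨W, f ∘ h, hW, ?_, mapStr_mapStr f h W⟩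
      intro r t1 ht1 t2 ht2 hne
      obtain ⟨i, hi⟩ := hch r t1 ht1 t2 ht2 hne
      refine ⟨i, fun hc => hi (hfinj ?_ ?_ hc)⟩
      · rw [supp_mapStr]; exact ⟨t1 i, mem_supp_of_tuple ht1 i, rfl⟩
      · rw [supp_mapStr]; exact ⟨t2 i, mem_supp_of_tuple ht2 i, rfl⟩
  | @intf S S' h1 hint ih =>
      obtain ⟨W, h, hW, hch, rfl⟩ := ih
      obtain ⟨E, hE, hcomp, g, hgiff, rfl⟩ := hint
      refine ⟨W, g ∘ h, hW, ?_, mapStr_mapStr g h W⟩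
      intro r t1 ht1 t2 ht2 hne
      have hm1 : (fun i => h (t1 i)) ∈ (mapStr h W).interp r := ⟨t1, ht1, rfl⟩
      have hm2 : (fun i => h (t2 i)) ∈ (mapStr h W).interp r := ⟨t2, ht2, rfl⟩
      have hne' : (fun i => h (t1 i)) ≠ fun i => h (t2 i) := by
        obtain ⟨i, hi⟩ := hch r t1 ht1 t2 ht2 hne
        intro hc
        exact hi (congrFun hc i)
      obtain ⟨i, hi⟩ := hcomp r _ hm1 _ hm2 hne'
      refine ⟨i, fun hc => hi ?_⟩
      have m1 : h (t1 i) ∈ (mapStr h W).supp := by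
        rw [supp_mapStr]; exact ⟨t1 i, mem_supp_of_tuple ht1 i, rfl⟩
      have m2 : h (t2 i) ∈ (mapStr h W).supp := by
        rw [supp_mapStr]; exact ⟨t2 i, mem_supp_of_tuple ht2 i, rfl⟩
      exact (hgiff _ m1 _ m2).mpr hc
  | @fuse S1 S2 S h1 h2 hf ih1 ih2 =>
      obtain ⟨W1, k1, hW1, hch1, rfl⟩ := ih1
      obtain ⟨W2, k2, hW2, hch2, rfl⟩ := ih2
      obtain ⟨S1', S2', M, ⟨σ1, hσ1, hS1'⟩, ⟨σ2, hσ2, hS2'⟩, hdisj, hMne, hMmatch,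
        hMsides, hMcompat, q, hqiff, hSeq⟩ := hf
      -- rewrite S1', S2' as direct quotients of W1, W2
      set φ1 : V → V := σ1 ∘ k1 with hφ1
      set φ2 : V → V := σ2 ∘ k2 with hφ2
      have hS1'' : S1' = mapStr φ1 W1 := by rw [hS1', mapStr_mapStr]
      have hS2'' : S2' = mapStr φ2 W2 := by rw [hS2', mapStr_mapStr]
      have hsupp1 : S1'.supp = φ1 '' W1.supp := by rw [hS1'', supp_mapStr]
      have hsupp2 : S2'.supp = φ2 '' W2.supp := by rw [hS2'', supp_mapStr]
      -- fresh disjoint copies of W1 and W2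
      obtain ⟨β1, hβ1inj, -⟩ :=
        exists_fresh_inj (V := V) W1.supp ∅ (supp_finite W1) (Set.finite_empty)
      obtain ⟨β2, hβ2inj, hβ2disj⟩ :=
        exists_fresh_inj (V := V) W2.supp (β1 '' W1.supp) (supp_finite W2)
          ((supp_finite W1).image β1)
      have hranges : ∀ x ∈ W1.supp, ∀ y ∈ W2.supp, β1 x ≠ β2 y := by
        intro x hx y hy hc
        have : β2 y ∈ (β2 '' W2.supp) ∩ (β1 '' W1.supp) :=
          ⟨⟨y, hy, rfl⟩, ⟨x, hx, hc⟩⟩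
        exact Set.eq_empty_iff_forall_notMem.mp hβ2disj _ this
      -- choice of fiber representatives
      set w1 : V → V := Function.invFunOn φ1 W1.supp with hw1def
      set w2 : V → V := Function.invFunOn φ2 W2.supp with hw2def
      have hw1 : ∀ a ∈ S1'.supp, w1 a ∈ W1.supp ∧ φ1 (w1 a) = a := by
        intro a ha
        rw [hsupp1] at ha
        obtain ⟨x, hx, rfl⟩ := ha
        exact ⟨Function.invFunOn_mem ⟨x, hx, rfl⟩, Function.invFunOn_eq ⟨x, hx, rfl⟩⟩
      have hw2 : ∀ b ∈ S2'.supp, w2 b ∈ W2.supp ∧ φ2 (w2 b) = b := by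
        intro b hb
        rw [hsupp2] at hb
        obtain ⟨x, hx, rfl⟩ := hb
        exact ⟨Function.invFunOn_mem ⟨x, hx, rfl⟩, Function.invFunOn_eq ⟨x, hx, rfl⟩⟩
      -- the lifted matching
      set Mt : Set (V × V) := (fun p : V × V => (β1 (w1 p.1), β2 (w2 p.2))) '' M
        with hMt
      have hMtmem : ∀ p ∈ M, (β1 (w1 p.1), β2 (w2 p.2)) ∈ Mt := by
        intro p hp; exact ⟨p, hp, rfl⟩
      have hw1mem : ∀ p ∈ M, w1 p.1 ∈ W1.supp ∧ φ1 (w1 p.1) = p.1 :=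
        fun p hp => hw1 p.1 (hMsides p hp).1
      have hw2mem : ∀ p ∈ M, w2 p.2 ∈ W2.supp ∧ φ2 (w2 p.2) = p.2 :=
        fun p hp => hw2 p.2 (hMsides p hp).2
      -- injectivity facts
      have hinj1 : ∀ p ∈ M, ∀ r ∈ M, β1 (w1 p.1) = β1 (w1 r.1) → p.1 = r.1 := by
        intro p hp r hr hc
        have := hβ1inj (hw1mem p hp).1 (hw1mem r hr).1 hc
        rw [← (hw1mem p hp).2, ← (hw1mem r hr).2, this]
      have hinj2 : ∀ p ∈ M, ∀ r ∈ M, β2 (w2 p.2) = β2 (w2 r.2) → p.2 = r.2 := by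
        intro p hp r hr hc
        have := hβ2inj (hw2mem p hp).1 (hw2mem r hr).1 hc
        rw [← (hw2mem p hp).2, ← (hw2mem r hr).2, this]
      have hMtmatch : IsMatching Mt := by
        rintro p' ⟨p, hp, rfl⟩ q' ⟨q, hq, rfl⟩ hne
        apply Set.eq_empty_iff_forall_notMem.mpr
        rintro e ⟨he1, he2⟩
        simp only [Set.mem_insert_iff, Set.mem_singleton_iff] at he1 he2
        have hpq : p ≠ q := by rintro rfl; exact hne rfl
        have hMpq := hMmatch p hp q hq hpq
        have : ∃ x ∈ ({p.1, p.2} : Set V), x ∈ ({q.1, q.2} : Set V) := by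
          rcases he1 with rfl | rfl <;> rcases he2 with he2 | he2
          · exact ⟨p.1, by simp, by rw [hinj1 p hp q hq he2]; simp⟩
          · exact absurd he2 (hranges _ (hw1mem p hp).1 _ (hw2mem q hq).1)
          · exact absurd he2.symm (hranges _ (hw1mem q hq).1 _ (hw2mem p hp).1)
          · exact ⟨p.2, by simp, by rw [hinj2 p hp q hq he2]; simp⟩
        obtain ⟨x, hx1, hx2⟩ := this
        have : x ∈ ({p.1, p.2} ∩ {q.1, q.2} : Set V) := ⟨hx1, hx2⟩
        exact Set.eq_empty_iff_forall_notMem.mp hMpq _ this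
      -- the fused structure upstairs
      set Wh1 : Str Rel ar V := mapStr β1 W1 with hWh1
      set Wh2 : Str Rel ar V := mapStr β2 W2 with hWh2
      -- quotient map for the lifted matching
      set g : V → V := fun e =>
        if hc : ∃ p, p ∈ M ∧ e = β2 (w2 p.2) then β1 (w1 hc.choose.1) else e with hgdef
      have hg_id : ∀ e, (¬ ∃ p, p ∈ M ∧ e = β2 (w2 p.2)) → g e = e := by
        intro e he; simp only [hgdef, dif_neg he]
      have hg_1 : ∀ x ∈ W1.supp, g (β1 x) = β1 x := by
        intro x hx
        apply hg_id
        rintro ⟨p, hp, hc⟩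
        exact hranges x hx _ (hw2mem p hp).1 hc
      have hg_2 : ∀ p ∈ M, g (β2 (w2 p.2)) = β1 (w1 p.1) := by
        intro p hp
        have hc : ∃ r, r ∈ M ∧ β2 (w2 p.2) = β2 (w2 r.2) := ⟨p, hp, rfl⟩
        simp only [hgdef, dif_pos hc]
        have h2 : hc.choose.2 = p.2 := (hinj2 _ hc.choose_spec.1 p hp hc.choose_spec.2.symm)
        -- matching: same second component forces same pair
        have : hc.choose = p := by
          by_contra hne
          have := hMmatch _ hc.choose_spec.1 p hp hne
          have hmem : p.2 ∈ ({hc.choose.1, hc.choose.2} ∩ {p.1, p.2} : Set V) := by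
            constructor
            · exact Set.mem_insert_iff.mpr (Or.inr (Set.mem_singleton_iff.mpr h2.symm))
            · exact Set.mem_insert_iff.mpr (Or.inr (Set.mem_singleton_iff.mpr rfl))
          exact Set.eq_empty_iff_forall_notMem.mp this _ hmem
        rw [this]
      have hg_2' : ∀ y, (¬ ∃ p, p ∈ M ∧ β2 y = β2 (w2 p.2)) → g (β2 y) = β2 y :=
        fun y h => hg_id _ h
      -- compatibility of the lifted matching
      have hMtchar := eqvOf_matching hMtmatch
      have hMchar := eqvOf_matching hMmatch
      have harr : ∀ r : Rel, (0 : ℕ) < ar r := fun r => har r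
      have hMtcompat : CompatibleE (Wh1.comp Wh2) (EqvOf fun a b => (a, b) ∈ Mt) := by
        intro r t1 ht1 t2 ht2 hne
        by_contra hc
        push_neg at hc
        have hc' : ∀ i, t1 i = t2 i ∨ (t1 i, t2 i) ∈ Mt ∨ (t2 i, t1 i) ∈ Mt :=
          fun i => (hMtchar _ _).mp (hc i)
        have hMt1 : ∀ p' ∈ Mt, ∃ p ∈ M, p' = (β1 (w1 p.1), β2 (w2 p.2)) := by
          rintro p' ⟨p, hp, rfl⟩; exact ⟨p, hp, rfl⟩
        rcases (show t1 ∈ Wh1.interp r ∪ Wh2.interp r from ht1) with h1 | h1 <;>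
          rcases (show t2 ∈ Wh1.interp r ∪ Wh2.interp r from ht2) with h2 | h2
        · -- both in Wh1
          obtain ⟨s1, hs1, rfl⟩ := h1
          obtain ⟨s2, hs2, rfl⟩ := h2
          have hsne : s1 ≠ s2 := by rintro rfl; exact hne rfl
          obtain ⟨i, hi⟩ := tuple_ne_iff hsne
          rcases hc' i with h | h | h
          · exact hi (hβ1inj (mem_supp_of_tuple hs1 i) (mem_supp_of_tuple hs2 i) h)
          · obtain ⟨p, hp, hpe⟩ := hMt1 _ h
            simp only [Prod.mk.injEq, Function.comp_apply] at hpe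
            exact hranges _ (mem_supp_of_tuple hs2 i) _ (hw2mem p hp).1 hpe.2
          · obtain ⟨p, hp, hpe⟩ := hMt1 _ h
            simp only [Prod.mk.injEq, Function.comp_apply] at hpe
            exact hranges _ (mem_supp_of_tuple hs1 i) _ (hw2mem p hp).1 hpe.2
        · -- t1 in Wh1, t2 in Wh2 : cross
          obtain ⟨s1, hs1, rfl⟩ := h1
          obtain ⟨s2, hs2, rfl⟩ := h2
          have key : ∀ i, ∃ p ∈ M, φ1 (s1 i) = p.1 ∧ φ2 (s2 i) = p.2 := by
            intro i
            rcases hc' i with h | h | h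
            · exact absurd h (hranges _ (mem_supp_of_tuple hs1 i) _ (mem_supp_of_tuple hs2 i))
            · obtain ⟨p, hp, hpe⟩ := hMt1 _ h
              simp only [Prod.mk.injEq, Function.comp_apply] at hpe
              refine ⟨p, hp, ?_, ?_⟩
              · rw [← (hw1mem p hp).2]
                exact congrArg φ1 (hβ1inj (mem_supp_of_tuple hs1 i) (hw1mem p hp).1 hpe.1)
              · rw [← (hw2mem p hp).2]
                exact congrArg φ2 (hβ2inj (mem_supp_of_tuple hs2 i) (hw2mem p hp).1 hpe.2)
            · obtain ⟨p, hp, hpe⟩ := hMt1 _ h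
              simp only [Prod.mk.injEq, Function.comp_apply] at hpe
              exact absurd hpe.1.symm
                (hranges _ (hw1mem p hp).1 _ (mem_supp_of_tuple hs2 i))
          have hu1 : (fun i => φ1 (s1 i)) ∈ S1'.interp r := by
            rw [hS1'']; exact ⟨s1, hs1, rfl⟩
          have hu2 : (fun i => φ2 (s2 i)) ∈ S2'.interp r := by
            rw [hS2'']; exact ⟨s2, hs2, rfl⟩
          have hune : (fun i => φ1 (s1 i)) ≠ fun i => φ2 (s2 i) := by
            intro hcon
            have i0 : Fin (ar r) := ⟨0, harr r⟩
            have m1 : φ1 (s1 i0) ∈ S1'.supp := mem_supp_of_tuple hu1 i0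
            have m2 : φ2 (s2 i0) ∈ S2'.supp := mem_supp_of_tuple hu2 i0
            have : φ1 (s1 i0) ∈ S1'.supp ∩ S2'.supp := ⟨m1, congrFun hcon i0 ▸ m2⟩
            exact Set.eq_empty_iff_forall_notMem.mp hdisj _ this
          obtain ⟨i, hi⟩ := hMcompat r _ (Or.inl hu1) _ (Or.inr hu2) hune
          obtain ⟨p, hp, e1, e2⟩ := key i
          exact hi (e1 ▸ e2 ▸ eqvOf_gen (show ((p.1, p.2) ∈ M) from by simpa using hp))
        · -- t1 in Wh2, t2 in Wh1 : cross, mirrored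
          obtain ⟨s1, hs1, rfl⟩ := h1
          obtain ⟨s2, hs2, rfl⟩ := h2
          have key : ∀ i, ∃ p ∈ M, φ1 (s2 i) = p.1 ∧ φ2 (s1 i) = p.2 := by
            intro i
            rcases hc' i with h | h | h
            · exact absurd h.symm
                (hranges _ (mem_supp_of_tuple hs2 i) _ (mem_supp_of_tuple hs1 i))
            · obtain ⟨p, hp, hpe⟩ := hMt1 _ h
              simp only [Prod.mk.injEq, Function.comp_apply] at hpe
              exact absurd hpe.1.symm
                (hranges _ (hw1mem p hp).1 _ (mem_supp_of_tuple hs1 i))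
            · obtain ⟨p, hp, hpe⟩ := hMt1 _ h
              simp only [Prod.mk.injEq, Function.comp_apply] at hpe
              refine ⟨p, hp, ?_, ?_⟩
              · rw [← (hw1mem p hp).2]
                exact congrArg φ1 (hβ1inj (mem_supp_of_tuple hs2 i) (hw1mem p hp).1 hpe.1)
              · rw [← (hw2mem p hp).2]
                exact congrArg φ2 (hβ2inj (mem_supp_of_tuple hs1 i) (hw2mem p hp).1 hpe.2)
          have hu1 : (fun i => φ1 (s2 i)) ∈ S1'.interp r := by
            rw [hS1'']; exact ⟨s2, hs2, rfl⟩
          have hu2 : (fun i => φ2 (s1 i)) ∈ S2'.interp r := by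
            rw [hS2'']; exact ⟨s1, hs1, rfl⟩
          have hune : (fun i => φ1 (s2 i)) ≠ fun i => φ2 (s1 i) := by
            intro hcon
            have i0 : Fin (ar r) := ⟨0, harr r⟩
            have m1 : φ1 (s2 i0) ∈ S1'.supp := mem_supp_of_tuple hu1 i0
            have m2 : φ2 (s1 i0) ∈ S2'.supp := mem_supp_of_tuple hu2 i0
            have : φ1 (s2 i0) ∈ S1'.supp ∩ S2'.supp := ⟨m1, congrFun hcon i0 ▸ m2⟩
            exact Set.eq_empty_iff_forall_notMem.mp hdisj _ this
          obtain ⟨i, hi⟩ := hMcompat r _ (Or.inl hu1) _ (Or.inr hu2) hune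
          obtain ⟨p, hp, e1, e2⟩ := key i
          exact hi (e1 ▸ e2 ▸ eqvOf_gen (show ((p.1, p.2) ∈ M) from by simpa using hp))
        · -- both in Wh2
          obtain ⟨s1, hs1, rfl⟩ := h1
          obtain ⟨s2, hs2, rfl⟩ := h2
          have hsne : s1 ≠ s2 := by rintro rfl; exact hne rfl
          obtain ⟨i, hi⟩ := tuple_ne_iff hsne
          rcases hc' i with h | h | h
          · exact hi (hβ2inj (mem_supp_of_tuple hs1 i) (mem_supp_of_tuple hs2 i) h)
          · obtain ⟨p, hp, hpe⟩ := hMt1 _ h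
            simp only [Prod.mk.injEq, Function.comp_apply] at hpe
            exact hranges _ (hw1mem p hp).1 _ (mem_supp_of_tuple hs1 i) hpe.1.symm
          · obtain ⟨p, hp, hpe⟩ := hMt1 _ h
            simp only [Prod.mk.injEq, Function.comp_apply] at hpe
            exact hranges _ (hw1mem p hp).1 _ (mem_supp_of_tuple hs2 i) hpe.1.symm
      -- the quotient property of g
      have hsuppWh : (Wh1.comp Wh2).supp = β1 '' W1.supp ∪ β2 '' W2.supp := by
        rw [supp_comp, hWh1, hWh2, supp_mapStr, supp_mapStr]
      have hgiff : ∀ u ∈ (Wh1.comp Wh2).supp, ∀ v ∈ (Wh1.comp Wh2).supp,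
          ((EqvOf fun a b => (a, b) ∈ Mt) u v ↔ g u = g v) := by
        intro u hu v hv
        rw [hsuppWh] at hu hv
        rcases hu with ⟨x, hx, rfl⟩ | ⟨y, hy, rfl⟩ <;>
          rcases hv with ⟨x', hx', rfl⟩ | ⟨y', hy', rfl⟩
        · -- both β1
          rw [hMtchar, hg_1 x hx, hg_1 x' hx']
          constructor
          · rintro (h | h | h)
            · exact h
            · obtain ⟨p, hp, hpe⟩ := h
              simp only [Prod.mk.injEq] at hpe
              exact absurd hpe.2.symm (hranges _ hx' _ (hw2mem p hp).1)
            · obtain ⟨p, hp, hpe⟩ := h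
              simp only [Prod.mk.injEq] at hpe
              exact absurd hpe.2.symm (hranges _ hx _ (hw2mem p hp).1)
          · exact fun h => Or.inl h
        · -- u = β1 x, v = β2 y'
          rw [hMtchar]
          constructor
          · rintro (h | h | h)
            · exact absurd h (hranges _ hx _ hy')
            · obtain ⟨p, hp, hpe⟩ := h
              simp only [Prod.mk.injEq] at hpe
              rw [hg_1 x hx, ← hpe.2, hg_2 p hp, hpe.1]
            · obtain ⟨p, hp, hpe⟩ := h
              simp only [Prod.mk.injEq] at hpe
              exact absurd hpe.1 (hranges _ (hw1mem p hp).1 _ hy')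
          · intro h
            rw [hg_1 x hx] at h
            by_cases hm : ∃ p, p ∈ M ∧ β2 y' = β2 (w2 p.2)
            · obtain ⟨p, hp, hpe⟩ := hm
              rw [hpe, hg_2 p hp] at h
              refine Or.inr (Or.inl ⟨p, hp, ?_⟩)
              simp only [Prod.mk.injEq]
              exact ⟨h.symm, hpe.symm⟩
            · rw [hg_2' y' hm] at h
              exact absurd h (hranges _ hx _ hy')
        · -- u = β2 y, v = β1 x'
          rw [hMtchar]
          constructor
          · rintro (h | h | h)
            · exact absurd h.symm (hranges _ hx' _ hy)
            · obtain ⟨p, hp, hpe⟩ := h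
              simp only [Prod.mk.injEq] at hpe
              exact absurd hpe.1 (hranges _ (hw1mem p hp).1 _ hy)
            · obtain ⟨p, hp, hpe⟩ := h
              simp only [Prod.mk.injEq] at hpe
              rw [hg_1 x' hx', ← hpe.2, hg_2 p hp, hpe.1]
          · intro h
            rw [hg_1 x' hx'] at h
            by_cases hm : ∃ p, p ∈ M ∧ β2 y = β2 (w2 p.2)
            · obtain ⟨p, hp, hpe⟩ := hm
              rw [hpe, hg_2 p hp] at h
              refine Or.inr (Or.inr ⟨p, hp, ?_⟩)
              simp only [Prod.mk.injEq]
              exact ⟨h, hpe.symm⟩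
            · rw [hg_2' y hm] at h
              exact absurd h.symm (hranges _ hx' _ hy)
        · -- both β2
          rw [hMtchar]
          constructor
          · rintro (h | h | h)
            · rw [h]
            · obtain ⟨p, hp, hpe⟩ := h
              simp only [Prod.mk.injEq] at hpe
              exact absurd hpe.1 (hranges _ (hw1mem p hp).1 _ hy)
            · obtain ⟨p, hp, hpe⟩ := h
              simp only [Prod.mk.injEq] at hpe
              exact absurd hpe.1 (hranges _ (hw1mem p hp).1 _ hy')
          · intro h
            by_cases hm : ∃ p, p ∈ M ∧ β2 y = β2 (w2 p.2) <;>
              by_cases hm' : ∃ p, p ∈ M ∧ β2 y' = β2 (w2 p.2)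
            · obtain ⟨p, hp, hpe⟩ := hm
              obtain ⟨p', hp', hpe'⟩ := hm'
              rw [hpe, hg_2 p hp, hpe', hg_2 p' hp'] at h
              have h11 : p.1 = p'.1 := hinj1 p hp p' hp' h
              have hpp : p = p' := by
                by_contra hne2
                have hdj := hMmatch p hp p' hp' hne2
                have : p.1 ∈ ({p.1, p.2} ∩ {p'.1, p'.2} : Set V) := by
                  constructor
                  · simp
                  · rw [h11]; simp
                rw [hdj] at this
                exact this
              refine Or.inl ?_
              rw [hpe, hpe', hpp]
            · obtain ⟨p, hp, hpe⟩ := hm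
              rw [hpe, hg_2 p hp, hg_2' y' hm'] at h
              exact absurd h (hranges _ (hw1mem p hp).1 _ hy')
            · obtain ⟨p, hp, hpe⟩ := hm'
              rw [hg_2' y hm, hpe, hg_2 p hp] at h
              exact absurd h.symm (hranges _ (hw1mem p hp).1 _ hy)
            · rw [hg_2' y hm, hg_2' y' hm'] at h
              exact Or.inl h
      -- the fused structure downstairs is in the external closure
      set W : Str Rel ar V := mapStr g (Wh1.comp Wh2) with hWdef
      have hWef : efStar C W := by
        refine efStar.fuse hW1 hW2 ?_
        refine ⟨Wh1, Wh2, Mt, ⟨β1, hβ1inj, rfl⟩, ⟨β2, hβ2inj, rfl⟩, ?_, ?_, hMtmatch,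
          ?_, hMtcompat, g, hgiff, rfl⟩
        · rw [hWh1, hWh2, supp_mapStr, supp_mapStr, Set.inter_comm]
          exact hβ2disj
        · obtain ⟨p, hp⟩ := hMne
          exact ⟨_, hMtmem p hp⟩
        · rintro p' ⟨p, hp, rfl⟩
          constructor
          · rw [hWh1, supp_mapStr]; exact ⟨_, (hw1mem p hp).1, rfl⟩
          · rw [hWh2, supp_mapStr]; exact ⟨_, (hw2mem p hp).1, rfl⟩
      -- the overall quotient map
      set H : V → V := fun e =>
        if hc : ∃ x, x ∈ W1.supp ∧ e = β1 x then q (φ1 hc.choose)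
        else if hc2 : ∃ y, y ∈ W2.supp ∧ e = β2 y then q (φ2 hc2.choose) else e
        with hHdef
      have hH1 : ∀ x ∈ W1.supp, H (β1 x) = q (φ1 x) := by
        intro x hx
        have hc : ∃ x', x' ∈ W1.supp ∧ β1 x = β1 x' := ⟨x, hx, rfl⟩
        simp only [hHdef, dif_pos hc]
        have := hβ1inj hc.choose_spec.1 hx hc.choose_spec.2.symm
        rw [this]
      have hH2 : ∀ y ∈ W2.supp, H (β2 y) = q (φ2 y) := by
        intro y hy
        have hc : ¬ ∃ x, x ∈ W1.supp ∧ β2 y = β1 x := by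
          rintro ⟨x, hx, hc⟩
          exact hranges x hx y hy hc.symm
        have hc2 : ∃ y', y' ∈ W2.supp ∧ β2 y = β2 y' := ⟨y, hy, rfl⟩
        simp only [hHdef, dif_neg hc, dif_pos hc2]
        have := hβ2inj hc2.choose_spec.1 hy hc2.choose_spec.2.symm
        rw [this]
      -- pointwise values of H ∘ g on the copies
      have hHg1 : ∀ x ∈ W1.supp, H (g (β1 x)) = q (φ1 x) := by
        intro x hx
        rw [hg_1 x hx, hH1 x hx]
      have hHg2 : ∀ y ∈ W2.supp, H (g (β2 y)) = q (φ2 y) := by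
        intro y hy
        by_cases hm : ∃ p, p ∈ M ∧ β2 y = β2 (w2 p.2)
        · obtain ⟨p, hp, hpe⟩ := hm
          rw [hpe, hg_2 p hp, hH1 _ (hw1mem p hp).1, (hw1mem p hp).2]
          have hy2 : y = w2 p.2 := hβ2inj hy (hw2mem p hp).1 hpe
          rw [hy2, (hw2mem p hp).2]
          refine (hqiff _ ?_ _ ?_).mp (eqvOf_gen (by simpa using hp))
          · rw [supp_comp]; exact Or.inl (hMsides p hp).1
          · rw [supp_comp]; exact Or.inr (hMsides p hp).2
        · rw [hg_2' y hm, hH2 y hy]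
      -- S = mapStr H W
      have hkey : S = mapStr H W := by
        rw [hWdef, mapStr_mapStr, mapStr_comp_str, hWh1, hWh2, mapStr_mapStr,
          mapStr_mapStr]
        rw [mapStr_congr (f := (H ∘ g) ∘ β1) (g := q ∘ φ1)
            (fun x hx => show ((H ∘ g) ∘ β1) x = (q ∘ φ1) x from hHg1 x hx),
          mapStr_congr (f := (H ∘ g) ∘ β2) (g := q ∘ φ2)
            (fun y hy => show ((H ∘ g) ∘ β2) y = (q ∘ φ2) y from hHg2 y hy)]
        rw [← mapStr_mapStr q φ1 W1, ← mapStr_mapStr q φ2 W2, ← mapStr_comp_str,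
          ← hS1'', ← hS2'']
        exact hSeq
      refine ⟨W, H, hWef, ?_, hkey⟩
      -- compatibility of H on W
      intro r t1 ht1 t2 ht2 hne
      have htparse : ∀ t ∈ W.interp r, (∃ s1 ∈ W1.interp r, t = fun i => g (β1 (s1 i)))
          ∨ (∃ s2 ∈ W2.interp r, t = fun i => g (β2 (s2 i))) := by
        intro t ht
        obtain ⟨τ, hτ, rfl⟩ := ht
        rcases (show τ ∈ Wh1.interp r ∪ Wh2.interp r from hτ) with h | h
        · obtain ⟨s, hs, rfl⟩ := h
          exact Or.inl ⟨s, hs, rfl⟩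
        · obtain ⟨s, hs, rfl⟩ := h
          exact Or.inr ⟨s, hs, rfl⟩
      have hqinj1 : ∀ a ∈ W1.supp, ∀ b ∈ W1.supp, q (φ1 a) = q (φ1 b) → k1 a = k1 b := by
        intro a ha b hb hq
        have m1 : φ1 a ∈ S1'.supp := by rw [hsupp1]; exact ⟨a, ha, rfl⟩
        have m2 : φ1 b ∈ S1'.supp := by rw [hsupp1]; exact ⟨b, hb, rfl⟩
        have := (hqiff _ (by rw [supp_comp]; exact Or.inl m1)
          _ (by rw [supp_comp]; exact Or.inl m2)).mpr hq
        rcases (hMchar _ _).mp this with h | h | h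
        · have ma : k1 a ∈ (mapStr k1 W1).supp := by
            rw [supp_mapStr]; exact ⟨a, ha, rfl⟩
          have mb : k1 b ∈ (mapStr k1 W1).supp := by
            rw [supp_mapStr]; exact ⟨b, hb, rfl⟩
          exact hσ1 ma mb h
        · have := (hMsides _ h).2
          have h2 : φ1 b ∈ S1'.supp ∩ S2'.supp := ⟨m2, this⟩
          exact (Set.eq_empty_iff_forall_notMem.mp hdisj _ h2).elim
        · have := (hMsides _ h).2
          have h2 : φ1 a ∈ S1'.supp ∩ S2'.supp := ⟨m1, this⟩
          exact (Set.eq_empty_iff_forall_notMem.mp hdisj _ h2).elim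
      have hqinj2 : ∀ a ∈ W2.supp, ∀ b ∈ W2.supp, q (φ2 a) = q (φ2 b) → k2 a = k2 b := by
        intro a ha b hb hq
        have m1 : φ2 a ∈ S2'.supp := by rw [hsupp2]; exact ⟨a, ha, rfl⟩
        have m2 : φ2 b ∈ S2'.supp := by rw [hsupp2]; exact ⟨b, hb, rfl⟩
        have := (hqiff _ (by rw [supp_comp]; exact Or.inr m1)
          _ (by rw [supp_comp]; exact Or.inr m2)).mpr hq
        rcases (hMchar _ _).mp this with h | h | h
        · have ma : k2 a ∈ (mapStr k2 W2).supp := by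
            rw [supp_mapStr]; exact ⟨a, ha, rfl⟩
          have mb : k2 b ∈ (mapStr k2 W2).supp := by
            rw [supp_mapStr]; exact ⟨b, hb, rfl⟩
          exact hσ2 ma mb h
        · have := (hMsides _ h).1
          have h2 : φ2 a ∈ S1'.supp ∩ S2'.supp := ⟨this, m1⟩
          exact (Set.eq_empty_iff_forall_notMem.mp hdisj _ h2).elim
        · have := (hMsides _ h).1
          have h2 : φ2 b ∈ S1'.supp ∩ S2'.supp := ⟨this, m2⟩
          exact (Set.eq_empty_iff_forall_notMem.mp hdisj _ h2).elim
      rcases htparse t1 ht1 with ⟨s1, hs1, rfl⟩ | ⟨s1, hs1, rfl⟩ <;>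
        rcases htparse t2 ht2 with ⟨s2, hs2, rfl⟩ | ⟨s2, hs2, rfl⟩
      · -- both from W1
        have hsne : s1 ≠ s2 := by rintro rfl; exact hne rfl
        obtain ⟨i, hi⟩ := hch1 r s1 hs1 s2 hs2 hsne
        refine ⟨i, ?_⟩
        rw [hHg1 _ (mem_supp_of_tuple hs1 i), hHg1 _ (mem_supp_of_tuple hs2 i)]
        intro hc
        exact hi (hqinj1 _ (mem_supp_of_tuple hs1 i) _ (mem_supp_of_tuple hs2 i) hc)
      · -- cross W1/W2
        by_contra hcon
        push_neg at hcon
        have hall : ∀ i, q (φ1 (s1 i)) = q (φ2 (s2 i)) := by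
          intro i
          have := hcon i
          rwa [hHg1 _ (mem_supp_of_tuple hs1 i), hHg2 _ (mem_supp_of_tuple hs2 i)] at this
        have hu1 : (fun i => φ1 (s1 i)) ∈ S1'.interp r := by
          rw [hS1'']; exact ⟨s1, hs1, rfl⟩
        have hu2 : (fun i => φ2 (s2 i)) ∈ S2'.interp r := by
          rw [hS2'']; exact ⟨s2, hs2, rfl⟩
        have hune : (fun i => φ1 (s1 i)) ≠ fun i => φ2 (s2 i) := by
          intro hceq
          have i0 : Fin (ar r) := ⟨0, harr r⟩
          have m1 : φ1 (s1 i0) ∈ S1'.supp := mem_supp_of_tuple hu1 i0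
          have m2 : φ2 (s2 i0) ∈ S2'.supp := mem_supp_of_tuple hu2 i0
          have : φ1 (s1 i0) ∈ S1'.supp ∩ S2'.supp := ⟨m1, congrFun hceq i0 ▸ m2⟩
          exact Set.eq_empty_iff_forall_notMem.mp hdisj _ this
        obtain ⟨i, hi⟩ := hMcompat r _ (Or.inl hu1) _ (Or.inr hu2) hune
        refine hi ((hqiff _ ?_ _ ?_).mpr (hall i))
        · rw [supp_comp]; exact Or.inl (mem_supp_of_tuple hu1 i)
        · rw [supp_comp]; exact Or.inr (mem_supp_of_tuple hu2 i)
      · -- cross W2/W1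
        by_contra hcon
        push_neg at hcon
        have hall : ∀ i, q (φ1 (s2 i)) = q (φ2 (s1 i)) := by
          intro i
          have := hcon i
          rw [hHg2 _ (mem_supp_of_tuple hs1 i), hHg1 _ (mem_supp_of_tuple hs2 i)] at this
          exact this.symm
        have hu1 : (fun i => φ1 (s2 i)) ∈ S1'.interp r := by
          rw [hS1'']; exact ⟨s2, hs2, rfl⟩
        have hu2 : (fun i => φ2 (s1 i)) ∈ S2'.interp r := by
          rw [hS2'']; exact ⟨s1, hs1, rfl⟩
        have hune : (fun i => φ1 (s2 i)) ≠ fun i => φ2 (s1 i) := by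
          intro hceq
          have i0 : Fin (ar r) := ⟨0, harr r⟩
          have m1 : φ1 (s2 i0) ∈ S1'.supp := mem_supp_of_tuple hu1 i0
          have m2 : φ2 (s1 i0) ∈ S2'.supp := mem_supp_of_tuple hu2 i0
          have : φ1 (s2 i0) ∈ S1'.supp ∩ S2'.supp := ⟨m1, congrFun hceq i0 ▸ m2⟩
          exact Set.eq_empty_iff_forall_notMem.mp hdisj _ this
        obtain ⟨i, hi⟩ := hMcompat r _ (Or.inl hu1) _ (Or.inr hu2) hune
        refine hi ((hqiff _ ?_ _ ?_).mpr (hall i))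
        · rw [supp_comp]; exact Or.inl (mem_supp_of_tuple hu1 i)
        · rw [supp_comp]; exact Or.inr (mem_supp_of_tuple hu2 i)
      · -- both from W2
        have hsne : s1 ≠ s2 := by rintro rfl; exact hne rfl
        obtain ⟨i, hi⟩ := hch2 r s1 hs1 s2 hs2 hsne
        refine ⟨i, ?_⟩
        rw [hHg2 _ (mem_supp_of_tuple hs1 i), hHg2 _ (mem_supp_of_tuple hs2 i)]
        intro hc
        exact hi (hqinj2 _ (mem_supp_of_tuple hs1 i) _ (mem_supp_of_tuple hs2 i) hc)

end Aux4
section Aux5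

open Classical

variable {Rel : Type} {ar : Rel → ℕ} {V : Type}

/-- Reachability via touching. -/
def Reach (W : Str Rel ar V) : V → V → Prop := Relation.ReflTransGen (Touching W)

theorem reach_symm {W : Str Rel ar V} {a b : V} (h : Reach W a b) : Reach W b a := by
  induction h with
  | refl => exact Relation.ReflTransGen.refl
  | tail _ hstep ih => exact Relation.ReflTransGen.head (touching_symm hstep) ih

theorem reach_trans {W : Str Rel ar V} {a b c : V} (h1 : Reach W a b)
    (h2 : Reach W b c) : Reach W a c := Relation.ReflTransGen.trans h1 h2

theorem touching_of_tuple {W : Str Rel ar V} {r : Rel} {t : Fin (ar r) → V}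
    (ht : t ∈ W.interp r) (i j : Fin (ar r)) : Touching W (t i) (t j) :=
  ⟨r, t, ht, ⟨i, rfl⟩, ⟨j, rfl⟩⟩

/-- Components are closed under tuples. -/
theorem mem_component_of_tuple {W : Str Rel ar V} {y : V} {r : Rel}
    {t : Fin (ar r) → V} (ht : t ∈ W.interp r) {i j : Fin (ar r)}
    (hi : Reach W y (t i)) : Reach W y (t j) :=
  Relation.ReflTransGen.tail hi (touching_of_tuple ht i j)

/-- The set of cross-component fused pairs of a quotient map. -/
def crossSet (W : Str Rel ar V) (h : V → V) : Set (V × V) :=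
  {p | p.1 ∈ W.supp ∧ p.2 ∈ W.supp ∧ h p.1 = h p.2 ∧ p.1 ≠ p.2 ∧ ¬ Reach W p.1 p.2}

theorem crossSet_finite (W : Str Rel ar V) (h : V → V) : (crossSet W h).Finite := by
  refine Set.Finite.subset ((supp_finite W).prod (supp_finite W)) ?_
  rintro ⟨a, b⟩ ⟨ha, hb, -⟩
  exact ⟨ha, hb⟩

end Aux5
section Aux6

open Classical

variable {Rel : Type} {ar : Rel → ℕ} {V : Type}

theorem touching_mono {W W' : Str Rel ar V}
    (hsub : ∀ r, W.interp r ⊆ W'.interp r) {a b : V} (h : Touching W a b) :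
    Touching W' a b := by
  obtain ⟨r, t, ht, hi, hj⟩ := h
  exact ⟨r, t, hsub r ht, hi, hj⟩

theorem reach_mono {W W' : Str Rel ar V}
    (hsub : ∀ r, W.interp r ⊆ W'.interp r) {a b : V} (h : Reach W a b) :
    Reach W' a b :=
  Relation.ReflTransGen.mono (fun _ _ hab => touching_mono hsub hab) _ _ h

theorem cross_elim [Infinite V] (har : ∀ r, 1 ≤ ar r) (C : Set (Str Rel ar V))
    (W : Str Rel ar V) (h : V → V) (hW : efStar C W) (hch : CompatH W h)
    {x y : V} (hxy : (x, y) ∈ crossSet W h) :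
    ∃ (W₂ : Str Rel ar V) (h₂ : V → V), efStar C W₂ ∧ CompatH W₂ h₂ ∧
      (∀ r, (mapStr h W).interp r ⊆ (mapStr h₂ W₂).interp r) ∧
      (crossSet W₂ h₂).ncard < (crossSet W h).ncard := by
  obtain ⟨hxs, hys, hxyh, hxyne, hxyr⟩ := hxy
  set yc : Set V := {a | Reach W y a} with hycdef
  have hycy : y ∈ yc := Relation.ReflTransGen.refl
  have hxnyc : x ∉ yc := fun hc => hxyr (reach_symm hc)
  obtain ⟨β, hβinj, hβdisj⟩ := exists_fresh_inj W.supp (W.supp ∪ h '' W.supp)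
    (supp_finite W) ((supp_finite W).union ((supp_finite W).image h))
  have hβfresh : ∀ a ∈ W.supp, β a ∉ W.supp ∪ h '' W.supp := by
    intro a ha hmem
    exact Set.eq_empty_iff_forall_notMem.mp hβdisj (β a) ⟨⟨a, ha, rfl⟩, hmem⟩
  have hβns : ∀ a ∈ W.supp, β a ∉ W.supp := fun a ha hc => hβfresh a ha (Or.inl hc)
  have hβnh : ∀ a ∈ W.supp, ∀ b ∈ W.supp, β a ≠ h b := by
    intro a ha b hb hc
    exact hβfresh a ha (Or.inr ⟨b, hb, hc.symm⟩)
  set g : V → V := fun a => if a = β y then x else a with hgdef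
  set ρ : V → V := fun c => if c = y then x else β c with hρdef
  have hgW : ∀ a ∈ W.supp, g a = a := by
    intro a ha
    simp only [hgdef, if_neg (show a ≠ β y from fun hc => hβns y hys (hc ▸ ha))]
  have hgβ : ∀ c ∈ W.supp, g (β c) = ρ c := by
    intro c hc
    by_cases hcy : c = y
    · subst hcy
      simp only [hgdef, hρdef, if_pos rfl]
    · have : β c ≠ β y := fun hcon => hcy (hβinj hc hys hcon)
      simp only [hgdef, hρdef, if_neg this, if_neg hcy]
  have hρinj : ∀ c ∈ W.supp, ∀ c' ∈ W.supp, ρ c = ρ c' → c = c' := by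
    intro c hc c' hc' hcc
    by_cases h1 : c = y <;> by_cases h2 : c' = y
    · rw [h1, h2]
    · simp only [hρdef, if_pos h1, if_neg h2] at hcc
      exact absurd hcc.symm (hβns c' hc' ∘ fun hcon => hcon ▸ hxs)
    · simp only [hρdef, if_neg h1, if_pos h2] at hcc
      exact absurd hcc (hβns c hc ∘ fun hcon => hcon ▸ hxs)
    · simp only [hρdef, if_neg h1, if_neg h2] at hcc
      exact hβinj hc hc' hcc
  set W₂ : Str Rel ar V := mapStr g (W.comp (mapStr β W)) with hW₂def
  have hW2eq : W₂ = W.comp (mapStr ρ W) := by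
    rw [hW₂def, mapStr_comp_str, mapStr_mapStr]
    congr 1
    · rw [mapStr_congr (f := g) (g := id) (fun a ha => hgW a ha), mapStr_id]
    · exact mapStr_congr (fun c hc => hgβ c hc)
  have hW2interp : ∀ r, W₂.interp r = W.interp r ∪ (fun t => ρ ∘ t) '' W.interp r := by
    intro r; rw [hW2eq]; rfl
  have hW2parse : ∀ r, ∀ t ∈ W₂.interp r,
      t ∈ W.interp r ∨ ∃ s ∈ W.interp r, t = fun i => ρ (s i) := by
    intro r t ht
    rw [hW2interp] at ht
    rcases ht with ht | ⟨s, hs, rfl⟩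
    · exact Or.inl ht
    · exact Or.inr ⟨s, hs, rfl⟩
  -- the new quotient map
  set h₂ : V → V := fun a =>
    if a ∈ W.supp then (if a ∈ yc then β a else h a)
    else if hc : ∃ c, c ∈ W.supp ∧ a = β c then
      (if hc.choose ∈ yc then h hc.choose else a) else a with hh₂def
  have hh2s : ∀ a ∈ W.supp, h₂ a = if a ∈ yc then β a else h a := by
    intro a ha; simp only [hh₂def, if_pos ha]
  have hh2β : ∀ c ∈ W.supp, h₂ (β c) = if c ∈ yc then h c else β c := by
    intro c hc
    have h1 : β c ∉ W.supp := hβns c hc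
    have h2 : ∃ c', c' ∈ W.supp ∧ β c = β c' := ⟨c, hc, rfl⟩
    simp only [hh₂def, if_neg h1, dif_pos h2]
    have : h2.choose = c := hβinj h2.choose_spec.1 hc h2.choose_spec.2.symm
    rw [this]
  have hρyc : ∀ c ∈ W.supp, c ∈ yc → h₂ (ρ c) = h c := by
    intro c hc hcyc
    by_cases hcy : c = y
    · have hρc : ρ c = x := by simp [hρdef, hcy]
      rw [hρc, hh2s x hxs, if_neg hxnyc, hxyh, hcy]
    · have : ρ c = β c := by simp [hρdef, hcy]
      rw [this, hh2β c hc, if_pos hcyc]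
  have hρnyc : ∀ c ∈ W.supp, c ∉ yc → h₂ (ρ c) = β c := by
    intro c hc hcyc
    have hcy : c ≠ y := fun hcon => hcyc (hcon ▸ hycy)
    have : ρ c = β c := by simp [hρdef, hcy]
    rw [this, hh2β c hc, if_neg hcyc]
  -- tuple classification
  have htclass : ∀ r, ∀ t ∈ W.interp r, (∀ i, t i ∈ yc) ∨ (∀ i, t i ∉ yc) := by
    intro r t ht
    by_cases h0 : t ⟨0, har r⟩ ∈ yc
    · exact Or.inl fun i => mem_component_of_tuple ht h0
    · exact Or.inr fun i hi => h0 (mem_component_of_tuple ht hi)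
  -- tuple subset of the quotients
  have hsubset : ∀ r, (mapStr h W).interp r ⊆ (mapStr h₂ W₂).interp r := by
    rintro r t' ⟨s, hs, rfl⟩
    rcases htclass r s hs with hall | hnone
    · refine ⟨fun i => ρ (s i), ?_, ?_⟩
      · rw [hW2interp]
        exact Or.inr ⟨s, hs, rfl⟩
      · funext i
        show h₂ (ρ (s i)) = h (s i)
        exact hρyc (s i) (mem_supp_of_tuple hs i) (hall i)
    · refine ⟨s, ?_, ?_⟩
      · rw [hW2interp]; exact Or.inl hs
      · funext i
        show h₂ (s i) = h (s i)
        rw [hh2s (s i) (mem_supp_of_tuple hs i), if_neg (hnone i)]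
  -- the fusion is in the closure
  have hMsing : IsMatching ({((x : V), β y)} : Set (V × V)) := by
    intro p hp q hq hne
    simp only [Set.mem_singleton_iff] at hp hq
    exact absurd (hp.trans hq.symm) hne
  have hWef : efStar C W₂ := by
    refine efStar.fuse hW hW ⟨W, mapStr β W, {(x, β y)}, ⟨id, fun a _ b _ hc => hc,
      (mapStr_id W).symm⟩, ⟨β, hβinj, rfl⟩, ?_, ⟨_, rfl⟩, hMsing, ?_, ?_, g, ?_, rfl⟩
    · apply Set.eq_empty_iff_forall_notMem.mpr
      rintro v ⟨hv1, hv2⟩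
      rw [supp_mapStr] at hv2
      obtain ⟨c, hc, rfl⟩ := hv2
      exact hβns c hc hv1
    · rintro p hp
      simp only [Set.mem_singleton_iff] at hp
      subst hp
      refine ⟨hxs, ?_⟩
      rw [supp_mapStr]; exact ⟨y, hys, rfl⟩
    · -- compatibility of the singleton matching
      intro r t1 ht1 t2 ht2 hne
      have hchar := eqvOf_matching hMsing
      by_contra hcon
      push_neg at hcon
      have hc' : ∀ i, t1 i = t2 i ∨ (t1 i, t2 i) = (x, β y) ∨ (t2 i, t1 i) = (x, β y) := by
        intro i
        have := (hchar (t1 i) (t2 i)).mp (hcon i)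
        simpa using this
      rcases (show t1 ∈ W.interp r ∪ (mapStr β W).interp r from ht1) with h1 | h1 <;>
        rcases (show t2 ∈ W.interp r ∪ (mapStr β W).interp r from ht2) with h2 | h2
      · obtain ⟨i, hi⟩ := tuple_ne_iff hne
        rcases hc' i with hc | hc | hc
        · exact hi hc
        · have e2 : t2 i = β y := congrArg Prod.snd hc
          exact hβns y hys (e2 ▸ mem_supp_of_tuple h2 i)
        · have e2 : t1 i = β y := congrArg Prod.snd hc
          exact hβns y hys (e2 ▸ mem_supp_of_tuple h1 i)
      · -- t1 in W, t2 in copy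
        obtain ⟨s2, hs2, rfl⟩ := h2
        have hkey : ∀ i, t1 i = x ∧ s2 i = y := by
          intro i
          rcases hc' i with hc | hc | hc
          · have hc2 : t1 i = β (s2 i) := hc
            exact absurd (hc2 ▸ mem_supp_of_tuple h1 i)
              (hβns (s2 i) (mem_supp_of_tuple hs2 i))
          · have e1 : t1 i = x := congrArg Prod.fst hc
            have e2 : β (s2 i) = β y := congrArg Prod.snd hc
            exact ⟨e1, hβinj (mem_supp_of_tuple hs2 i) hys e2⟩
          · have e1 : β (s2 i) = x := congrArg Prod.fst hc
            exact absurd (e1 ▸ hxs : β (s2 i) ∈ W.supp)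
              (hβns (s2 i) (mem_supp_of_tuple hs2 i))
        have ht1x : t1 = fun _ => x := funext fun i => (hkey i).1
        have hs2y : s2 = fun _ => y := funext fun i => (hkey i).2
        have hne2 : t1 ≠ s2 := by
          rw [ht1x, hs2y]
          intro hcon2
          exact hxyne (congrFun hcon2 ⟨0, har r⟩)
        obtain ⟨i, hi⟩ := hch r t1 h1 s2 hs2 hne2
        rw [ht1x, hs2y] at hi
        exact hi (by simpa using hxyh)
      · -- t1 in copy, t2 in W
        obtain ⟨s1, hs1, rfl⟩ := h1
        have hkey : ∀ i, t2 i = x ∧ s1 i = y := by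
          intro i
          rcases hc' i with hc | hc | hc
          · have hc2 : t2 i = β (s1 i) := hc.symm
            exact absurd (hc2 ▸ mem_supp_of_tuple h2 i)
              (hβns (s1 i) (mem_supp_of_tuple hs1 i))
          · have e1 : β (s1 i) = x := congrArg Prod.fst hc
            exact absurd (e1 ▸ hxs : β (s1 i) ∈ W.supp)
              (hβns (s1 i) (mem_supp_of_tuple hs1 i))
          · have e1 : t2 i = x := congrArg Prod.fst hc
            have e2 : β (s1 i) = β y := congrArg Prod.snd hc
            exact ⟨e1, hβinj (mem_supp_of_tuple hs1 i) hys e2⟩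
        have ht2x : t2 = fun _ => x := funext fun i => (hkey i).1
        have hs1y : s1 = fun _ => y := funext fun i => (hkey i).2
        have hne2 : t2 ≠ s1 := by
          rw [ht2x, hs1y]
          intro hcon2
          exact hxyne (congrFun hcon2 ⟨0, har r⟩)
        obtain ⟨i, hi⟩ := hch r t2 h2 s1 hs1 hne2
        rw [ht2x, hs1y] at hi
        exact hi (by simpa using hxyh)
      · -- both in copy
        obtain ⟨s1, hs1, rfl⟩ := h1
        obtain ⟨s2, hs2, rfl⟩ := h2
        have hsne : s1 ≠ s2 := by rintro rfl; exact hne rfl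
        obtain ⟨i, hi⟩ := tuple_ne_iff hsne
        rcases hc' i with hc | hc | hc
        · exact hi (hβinj (mem_supp_of_tuple hs1 i) (mem_supp_of_tuple hs2 i) hc)
        · have e1 : β (s1 i) = x := congrArg Prod.fst hc
          exact hβns (s1 i) (mem_supp_of_tuple hs1 i) (e1 ▸ hxs)
        · have e1 : β (s2 i) = x := congrArg Prod.fst hc
          exact hβns (s2 i) (mem_supp_of_tuple hs2 i) (e1 ▸ hxs)
    · -- QuotBy property of g
      intro u hu v hv
      have hchar := eqvOf_matching hMsing
      have hsupp : (W.comp (mapStr β W)).supp = W.supp ∪ β '' W.supp := by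
        rw [supp_comp, supp_mapStr]
      rw [hsupp] at hu hv
      have hgy : g (β y) = x := by simp [hgdef]
      constructor
      · intro hE
        rcases (by simpa using (hchar u v).mp hE :
            u = v ∨ (u = x ∧ v = β y) ∨ (v = x ∧ u = β y)) with hc | ⟨hc1, hc2⟩ | ⟨hc1, hc2⟩
        · rw [hc]
        · rw [hc1, hc2, hgy, hgW x hxs]
        · rw [hc1, hc2, hgy, hgW x hxs]
      · intro hgeq
        rcases hu with hu | ⟨c, hc, rfl⟩ <;> rcases hv with hv | ⟨c', hc', rfl⟩
        · rw [hgW u hu, hgW v hv] at hgeq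
          rw [hgeq]
          intro E hE _; exact hE.refl v
        · rw [hgW u hu, hgβ c' hc'] at hgeq
          by_cases hcy : c' = y
          · subst hcy
            have : u = x := by
              rw [hgeq]; simp [hρdef]
            subst this
            exact eqvOf_gen (by simp)
          · have : ρ c' = β c' := by simp [hρdef, hcy]
            rw [this] at hgeq
            exact absurd (hgeq ▸ hu) (hβns c' hc')
        · rw [hgW v hv, hgβ c hc] at hgeq
          by_cases hcy : c = y
          · subst hcy
            have : v = x := by
              rw [← hgeq]; simp [hρdef]
            subst this
            intro E hE hR; exact hE.symm (hR _ _ (by simp))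
          · have : ρ c = β c := by simp [hρdef, hcy]
            rw [this] at hgeq
            exact absurd (hgeq.symm ▸ hv) (hβns c hc)
        · rw [hgβ c hc, hgβ c' hc'] at hgeq
          have : c = c' := hρinj c hc c' hc' hgeq
          subst this
          intro E hE _; exact hE.refl _
  -- compatibility of h₂ on W₂
  have hcomp₂ : CompatH W₂ h₂ := by
    intro r t1 ht1 t2 ht2 hne
    have i0 : Fin (ar r) := ⟨0, har r⟩
    rcases hW2parse r t1 ht1 with h1 | ⟨s1, hs1, rfl⟩ <;>
      rcases hW2parse r t2 ht2 with h2 | ⟨s2, hs2, rfl⟩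
    · -- both W-tuples
      rcases htclass r t1 h1 with ha1 | ha1 <;> rcases htclass r t2 h2 with ha2 | ha2
      · obtain ⟨i, hi⟩ := tuple_ne_iff hne
        refine ⟨i, ?_⟩
        rw [hh2s _ (mem_supp_of_tuple h1 i), if_pos (ha1 i),
          hh2s _ (mem_supp_of_tuple h2 i), if_pos (ha2 i)]
        exact fun hc => hi (hβinj (mem_supp_of_tuple h1 i) (mem_supp_of_tuple h2 i) hc)
      · refine ⟨i0, ?_⟩
        rw [hh2s _ (mem_supp_of_tuple h1 i0), if_pos (ha1 i0),
          hh2s _ (mem_supp_of_tuple h2 i0), if_neg (ha2 i0)]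
        exact hβnh _ (mem_supp_of_tuple h1 i0) _ (mem_supp_of_tuple h2 i0)
      · refine ⟨i0, ?_⟩
        rw [hh2s _ (mem_supp_of_tuple h1 i0), if_neg (ha1 i0),
          hh2s _ (mem_supp_of_tuple h2 i0), if_pos (ha2 i0)]
        exact fun hc => hβnh _ (mem_supp_of_tuple h2 i0) _ (mem_supp_of_tuple h1 i0) hc.symm
      · obtain ⟨i, hi⟩ := hch r t1 h1 t2 h2 hne
        refine ⟨i, ?_⟩
        rw [hh2s _ (mem_supp_of_tuple h1 i), if_neg (ha1 i),
          hh2s _ (mem_supp_of_tuple h2 i), if_neg (ha2 i)]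
        exact hi
    · -- t1 W-tuple, t2 copy
      rcases htclass r t1 h1 with ha1 | ha1 <;> rcases htclass r s2 hs2 with ha2 | ha2
      · refine ⟨i0, ?_⟩
        rw [hh2s _ (mem_supp_of_tuple h1 i0), if_pos (ha1 i0),
          hρyc _ (mem_supp_of_tuple hs2 i0) (ha2 i0)]
        exact hβnh _ (mem_supp_of_tuple h1 i0) _ (mem_supp_of_tuple hs2 i0)
      · refine ⟨i0, ?_⟩
        rw [hh2s _ (mem_supp_of_tuple h1 i0), if_pos (ha1 i0),
          hρnyc _ (mem_supp_of_tuple hs2 i0) (ha2 i0)]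
        exact fun hc => (ha2 i0) (hβinj (mem_supp_of_tuple h1 i0)
          (mem_supp_of_tuple hs2 i0) hc ▸ ha1 i0)
      · -- t1 non-yc, s2 yc : h-values on both sides
        have hne2 : t1 ≠ s2 := by
          intro hcon
          exact (ha1 i0) (hcon ▸ ha2 i0)
        obtain ⟨i, hi⟩ := hch r t1 h1 s2 hs2 hne2
        refine ⟨i, ?_⟩
        rw [hh2s _ (mem_supp_of_tuple h1 i), if_neg (ha1 i),
          hρyc _ (mem_supp_of_tuple hs2 i) (ha2 i)]
        exact hi
      · refine ⟨i0, ?_⟩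
        rw [hh2s _ (mem_supp_of_tuple h1 i0), if_neg (ha1 i0),
          hρnyc _ (mem_supp_of_tuple hs2 i0) (ha2 i0)]
        exact fun hc => hβnh _ (mem_supp_of_tuple hs2 i0) _ (mem_supp_of_tuple h1 i0) hc.symm
    · -- t1 copy, t2 W-tuple
      rcases htclass r s1 hs1 with ha1 | ha1 <;> rcases htclass r t2 h2 with ha2 | ha2
      · refine ⟨i0, ?_⟩
        rw [hρyc _ (mem_supp_of_tuple hs1 i0) (ha1 i0),
          hh2s _ (mem_supp_of_tuple h2 i0), if_pos (ha2 i0)]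
        exact fun hc => hβnh _ (mem_supp_of_tuple h2 i0) _ (mem_supp_of_tuple hs1 i0) hc.symm
      · have hne2 : s1 ≠ t2 := by
          intro hcon
          exact (ha2 i0) (hcon ▸ ha1 i0)
        obtain ⟨i, hi⟩ := hch r s1 hs1 t2 h2 hne2
        refine ⟨i, ?_⟩
        rw [hρyc _ (mem_supp_of_tuple hs1 i) (ha1 i),
          hh2s _ (mem_supp_of_tuple h2 i), if_neg (ha2 i)]
        exact hi
      · refine ⟨i0, ?_⟩
        rw [hρnyc _ (mem_supp_of_tuple hs1 i0) (ha1 i0),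
          hh2s _ (mem_supp_of_tuple h2 i0), if_pos (ha2 i0)]
        exact fun hc => (ha1 i0) (hβinj (mem_supp_of_tuple h2 i0)
          (mem_supp_of_tuple hs1 i0) hc.symm ▸ ha2 i0)
      · refine ⟨i0, ?_⟩
        rw [hρnyc _ (mem_supp_of_tuple hs1 i0) (ha1 i0),
          hh2s _ (mem_supp_of_tuple h2 i0), if_neg (ha2 i0)]
        exact hβnh _ (mem_supp_of_tuple hs1 i0) _ (mem_supp_of_tuple h2 i0)
    · -- both copies
      have hsne : s1 ≠ s2 := by rintro rfl; exact hne rfl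
      rcases htclass r s1 hs1 with ha1 | ha1 <;> rcases htclass r s2 hs2 with ha2 | ha2
      · obtain ⟨i, hi⟩ := hch r s1 hs1 s2 hs2 hsne
        refine ⟨i, ?_⟩
        rw [hρyc _ (mem_supp_of_tuple hs1 i) (ha1 i),
          hρyc _ (mem_supp_of_tuple hs2 i) (ha2 i)]
        exact hi
      · refine ⟨i0, ?_⟩
        rw [hρyc _ (mem_supp_of_tuple hs1 i0) (ha1 i0),
          hρnyc _ (mem_supp_of_tuple hs2 i0) (ha2 i0)]
        exact fun hc => hβnh _ (mem_supp_of_tuple hs2 i0) _ (mem_supp_of_tuple hs1 i0) hc.symm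
      · refine ⟨i0, ?_⟩
        rw [hρnyc _ (mem_supp_of_tuple hs1 i0) (ha1 i0),
          hρyc _ (mem_supp_of_tuple hs2 i0) (ha2 i0)]
        exact hβnh _ (mem_supp_of_tuple hs1 i0) _ (mem_supp_of_tuple hs2 i0)
      · obtain ⟨i, hi⟩ := tuple_ne_iff hsne
        refine ⟨i, ?_⟩
        rw [hρnyc _ (mem_supp_of_tuple hs1 i) (ha1 i),
          hρnyc _ (mem_supp_of_tuple hs2 i) (ha2 i)]
        exact fun hc => hi (hβinj (mem_supp_of_tuple hs1 i) (mem_supp_of_tuple hs2 i) hc)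
  refine ⟨W₂, h₂, hWef, hcomp₂, hsubset, ?_⟩
  -- the cross set strictly decreases
  set Φ : V → V := fun s => if s ∈ W.supp then s
    else (if hc : ∃ c, c ∈ W.supp ∧ s = β c then hc.choose else s) with hΦdef
  have hΦs : ∀ s ∈ W.supp, Φ s = s := by
    intro s hs; simp only [hΦdef, if_pos hs]
  have hΦβ : ∀ c ∈ W.supp, Φ (β c) = c := by
    intro c hc
    have h1 : β c ∉ W.supp := hβns c hc
    have h2 : ∃ c', c' ∈ W.supp ∧ β c = β c' := ⟨c, hc, rfl⟩
    simp only [hΦdef, if_neg h1, dif_pos h2]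
    exact hβinj h2.choose_spec.1 hc h2.choose_spec.2.symm
  have hsupp2 : W₂.supp = W.supp ∪ ρ '' W.supp := by
    rw [hW2eq, supp_comp, supp_mapStr]
  have hform : ∀ s ∈ W₂.supp, s ∈ W.supp ∨ ∃ c, c ∈ W.supp ∧ c ≠ y ∧ s = β c := by
    intro s hs
    rw [hsupp2] at hs
    rcases hs with hs | ⟨c, hc, rfl⟩
    · exact Or.inl hs
    · by_cases hcy : c = y
      · refine Or.inl ?_
        have : ρ c = x := by simp [hρdef, hcy]
        rw [this]; exact hxs
      · have : ρ c = β c := by simp [hρdef, hcy]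
        rw [this]
        exact Or.inr ⟨c, hc, hcy, rfl⟩
  -- h-typed certificates
  have hW2sub : ∀ r, W.interp r ⊆ W₂.interp r := by
    intro r t ht; rw [hW2interp]; exact Or.inl ht
  have hreachρ : ∀ a b : V, Reach W a b → Reach W₂ (ρ a) (ρ b) := by
    intro a b hab
    induction hab with
    | refl => exact Relation.ReflTransGen.refl
    | tail _ hstep ih =>
        obtain ⟨r, t, ht, ⟨i, rfl⟩, ⟨j, rfl⟩⟩ := hstep
        refine Relation.ReflTransGen.tail ih ⟨r, fun i => ρ (t i), ?_, ⟨i, rfl⟩, ⟨j, rfl⟩⟩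
        rw [hW2interp]
        exact Or.inr ⟨t, ht, rfl⟩
  have hHT : ∀ s ∈ W₂.supp, ∀ t ∈ W₂.supp, h₂ s = h₂ t → s ≠ t →
      Φ s ∈ W.supp ∧ h₂ s = h (Φ s) ∧
        ((s = Φ s ∧ Φ s ∉ yc) ∨ (s = β (Φ s) ∧ Φ s ∈ yc ∧ Φ s ≠ y)) := by
    -- we prove the claim for s, using the pairing with t to exclude β-typed values
    have typed : ∀ s ∈ W₂.supp,
        (Φ s ∈ W.supp ∧ h₂ s = h (Φ s) ∧
          ((s = Φ s ∧ Φ s ∉ yc) ∨ (s = β (Φ s) ∧ Φ s ∈ yc ∧ Φ s ≠ y))) ∨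
        (Φ s ∈ W.supp ∧ h₂ s = β (Φ s) ∧
          ((s = Φ s ∧ Φ s ∈ yc) ∨ (s = β (Φ s) ∧ Φ s ∉ yc))) := by
      intro s hs
      rcases hform s hs with hs' | ⟨c, hc, hcy, rfl⟩
      · rw [hΦs s hs']
        by_cases hyc : s ∈ yc
        · refine Or.inr ⟨hs', ?_, Or.inl ⟨rfl, hyc⟩⟩
          rw [hh2s s hs', if_pos hyc]
        · refine Or.inl ⟨hs', ?_, Or.inl ⟨rfl, hyc⟩⟩
          rw [hh2s s hs', if_neg hyc]
      · rw [hΦβ c hc]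
        by_cases hyc : c ∈ yc
        · refine Or.inl ⟨hc, ?_, Or.inr ⟨rfl, hyc, hcy⟩⟩
          rw [hh2β c hc, if_pos hyc]
        · refine Or.inr ⟨hc, ?_, Or.inr ⟨rfl, hyc⟩⟩
          rw [hh2β c hc, if_neg hyc]
    intro s hs t ht hval hne
    rcases typed s hs with hts | hts
    · exact hts
    rcases typed t ht with htt | htt
    · -- s β-typed, t h-typed : impossible
      exfalso
      have := hts.2.1
      rw [hval, htt.2.1] at this
      exact hβnh _ hts.1 _ htt.1 this.symm
    · -- both β-typed : forces s = t
      exfalso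
      have hee : β (Φ s) = β (Φ t) := by rw [← hts.2.1, ← htt.2.1, hval]
      have hΦeq : Φ s = Φ t := hβinj hts.1 htt.1 hee
      rcases hts.2.2 with ⟨he1, hy1⟩ | ⟨he1, hy1⟩ <;>
        rcases htt.2.2 with ⟨he2, hy2⟩ | ⟨he2, hy2⟩
      · exact hne (he1.trans (hΦeq.trans he2.symm))
      · exact hy2 (hΦeq ▸ hy1)
      · exact hy1 (hΦeq.symm ▸ hy2)
      · exact hne (he1.trans (by rw [hΦeq, ← he2]))
  have hmaps : ∀ p ∈ crossSet W₂ h₂,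
      (Φ p.1, Φ p.2) ∈ crossSet W h \ {((x : V), y)} := by
    rintro ⟨s, t⟩ ⟨hs, ht, hval, hne, hnr⟩
    obtain ⟨hΦs1, hval1, hcase1⟩ := hHT s hs t ht hval hne
    obtain ⟨hΦt1, hval2, hcase2⟩ := hHT t ht s hs hval.symm (Ne.symm hne)
    have hΦval : h (Φ s) = h (Φ t) := by rw [← hval1, ← hval2, hval]
    have hΦne : Φ s ≠ Φ t := by
      intro hceq
      rcases hcase1 with ⟨he1, hy1⟩ | ⟨he1, hy1, -⟩ <;>
        rcases hcase2 with ⟨he2, hy2⟩ | ⟨he2, hy2, -⟩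
      · exact hne (he1.trans (hceq.trans he2.symm))
      · exact hy1 (hceq ▸ hy2)
      · exact hy2 (hceq ▸ hy1)
      · exact hne (he1.trans (by rw [hceq, ← he2]))
    have hΦnr : ¬ Reach W (Φ s) (Φ t) := by
      intro hr
      rcases hcase1 with ⟨he1, hy1⟩ | ⟨he1, hy1, hyy1⟩ <;>
        rcases hcase2 with ⟨he2, hy2⟩ | ⟨he2, hy2, hyy2⟩
      · refine hnr ?_
        rw [he1, he2]
        exact reach_mono hW2sub hr
      · -- Φ s ∉ yc, Φ t ∈ yc : contradiction with reach
        exact hy1 (reach_trans hy2 (reach_symm hr))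
      · exact hy2 (reach_trans hy1 hr)
      · refine hnr ?_
        have := hreachρ _ _ hr
        have e1 : ρ (Φ s) = β (Φ s) := by simp [hρdef, hyy1]
        have e2 : ρ (Φ t) = β (Φ t) := by simp [hρdef, hyy2]
        rw [e1, e2, ← he1, ← he2] at this
        exact this
    refine ⟨⟨hΦs1, hΦt1, hΦval, hΦne, hΦnr⟩, ?_⟩
    intro hmem
    have hty : Φ t = y := congrArg Prod.snd hmem
    rcases hcase2 with ⟨he2, hy2⟩ | ⟨-, -, hyy2⟩
    · exact hy2 (hty ▸ hycy)
    · exact hyy2 hty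
  have hinj : Set.InjOn (fun p : V × V => (Φ p.1, Φ p.2)) (crossSet W₂ h₂) := by
    rintro ⟨s, t⟩ hp ⟨s', t'⟩ hq heq
    obtain ⟨hs, ht, hval, hne, -⟩ := hp
    obtain ⟨hs', ht', hval', hne', -⟩ := hq
    have e1 : Φ s = Φ s' := congrArg Prod.fst heq
    have e2 : Φ t = Φ t' := congrArg Prod.snd heq
    obtain ⟨-, -, hcase1⟩ := hHT s hs t ht hval hne
    obtain ⟨-, -, hcase2⟩ := hHT t ht s hs hval.symm (Ne.symm hne)
    obtain ⟨-, -, hcase1'⟩ := hHT s' hs' t' ht' hval' hne'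
    obtain ⟨-, -, hcase2'⟩ := hHT t' ht' s' hs' hval'.symm (Ne.symm hne')
    have hss : s = s' := by
      rcases hcase1 with ⟨he1, hy1⟩ | ⟨he1, hy1, -⟩ <;>
        rcases hcase1' with ⟨he2, hy2⟩ | ⟨he2, hy2, -⟩
      · rw [he1, he2, e1]
      · exact absurd (e1 ▸ hy2) hy1
      · exact absurd (e1 ▸ hy1) (by rw [e1] at hy1; exact fun hc => hy2 hc)
      · rw [he1, he2, e1]
    have htt : t = t' := by
      rcases hcase2 with ⟨he1, hy1⟩ | ⟨he1, hy1, -⟩ <;>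
        rcases hcase2' with ⟨he2, hy2⟩ | ⟨he2, hy2, -⟩
      · rw [he1, he2, e2]
      · exact absurd (e2 ▸ hy2) hy1
      · exact absurd (e2 ▸ hy1) (by rw [e2] at hy1; exact fun hc => hy2 hc)
      · rw [he1, he2, e2]
    rw [hss, htt]
  have hxymem : (x, y) ∈ crossSet W h := ⟨hxs, hys, hxyh, hxyne, hxyr⟩
  calc (crossSet W₂ h₂).ncard
      ≤ (crossSet W h \ {((x : V), y)}).ncard :=
        Set.ncard_le_ncard_of_injOn _ hmaps hinj ((crossSet_finite W h).diff)
    _ < (crossSet W h).ncard :=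
        Set.ncard_diff_singleton_lt_of_mem hxymem (crossSet_finite W h)

end Aux6
section Aux7

open Classical

variable {Rel : Type} {ar : Rel → ℕ} {V : Type}

theorem rtg_symm {α : Type*} {R : α → α → Prop} (hs : ∀ a b, R a b → R b a)
    {a b : α} (h : Relation.ReflTransGen R a b) : Relation.ReflTransGen R b a := by
  induction h with
  | refl => exact Relation.ReflTransGen.refl
  | tail _ hstep ih => exact Relation.ReflTransGen.head (hs _ _ hstep) ih

theorem supp_mono_of_interp {W X : Str Rel ar V} (h : ∀ r, W.interp r ⊆ X.interp r) :
    W.supp ⊆ X.supp := by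
  rintro u ⟨r, t, ht, i, rfl⟩
  exact ⟨r, t, h r ht, i, rfl⟩

/-- `z` is the value of a merged (non-trivial) class. -/
def MultiP (W : Str Rel ar V) (h : V → V) (z : V) : Prop :=
  ∃ a ∈ W.supp, ∃ b ∈ W.supp, a ≠ b ∧ h a = z ∧ h b = z

/-- State of the iterated bridge construction. -/
structure BState (C : Set (Str Rel ar V)) (W : Str Rel ar V) (h : V → V)
    (L : List V) where
  X : Str Rel ar V
  F : V → V
  D : Set V
  hX : efStar C X
  hD : D ⊆ X.supp
  hWD : W.supp ⊆ D
  hWt : ∀ r, W.interp r ⊆ X.interp r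
  hF : ∀ a ∈ W.supp, F a = h a
  hINVA : ∀ r, ∀ t ∈ X.interp r, t ∈ W.interp r ∨ ∀ i, t i ∈ W.supp → h (t i) ∉ L
  hjunk : ∀ c ∈ D, c ∉ W.supp → ∃ z', z' ∉ L ∧ MultiP W h z' ∧ F c = z'
  hfib : ∀ z', MultiP W h z' → z' ∉ L →
    ∀ a, a ∈ D → F a = z' → ∀ b, b ∈ D → F b = z' →
      Relation.ReflTransGen
        (fun c d => c ∈ D ∧ d ∈ D ∧ F c = z' ∧ F d = z' ∧ Touching X c d) a b

noncomputable def bstate_weaken {C : Set (Str Rel ar V)} {W : Str Rel ar V} {h : V → V}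
    {z : V} {L' : List V} (hnm : ¬ MultiP W h z) (st : BState C W h (z :: L')) :
    BState C W h L' where
  X := st.X
  F := st.F
  D := st.D
  hX := st.hX
  hD := st.hD
  hWD := st.hWD
  hWt := st.hWt
  hF := st.hF
  hINVA := by
    intro r t ht
    rcases st.hINVA r t ht with h1 | h1
    · exact Or.inl h1
    · refine Or.inr fun i hi hmem => h1 i hi ?_
      exact List.mem_cons_of_mem _ hmem
  hjunk := by
    intro c hc hcs
    obtain ⟨z', hz1, hz2, hz3⟩ := st.hjunk c hc hcs
    exact ⟨z', fun hmem => hz1 (List.mem_cons_of_mem _ hmem), hz2, hz3⟩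
  hfib := by
    intro z' hm hnmem
    by_cases hzz : z' = z
    · exact absurd (hzz ▸ hm) hnm
    · refine st.hfib z' hm ?_
      intro hmem
      rcases List.mem_cons.mp hmem with hc | hc
      · exact hzz hc
      · exact hnmem hc

theorem bstate_step [Infinite V] (har : ∀ r, 1 ≤ ar r) {C : Set (Str Rel ar V)}
    {W : Str Rel ar V} {h : V → V} (hWef : efStar C W) (hch : CompatH W h)
    (hintra : ∀ a ∈ W.supp, ∀ b ∈ W.supp, h a = h b → a ≠ b → Reach W a b)
    {z : V} {L' : List V} (hm : MultiP W h z) (hzL : z ∉ L')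
    (st : BState C W h (z :: L')) : Nonempty (BState C W h L') := by
  classical
  obtain ⟨X, F, D, hX, hD, hWD, hWt, hF, hINVA, hjunk, hfib⟩ := st
  -- the merged class
  set KF : Finset V := (supp_finite W).toFinset.filter (fun a => h a = z) with hKF
  have hKmem : ∀ a, a ∈ KF ↔ a ∈ W.supp ∧ h a = z := by
    intro a
    simp [hKF, Set.Finite.mem_toFinset]
  have hcard : 1 < KF.card := by
    obtain ⟨a, ha, b, hb, hne, h1, h2⟩ := hm
    exact Finset.one_lt_card.mpr ⟨a, (hKmem a).mpr ⟨ha, h1⟩, b, (hKmem b).mpr ⟨hb, h2⟩, hne⟩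
  set m := KF.card with hmdef
  haveI : NeZero m := ⟨by omega⟩
  set e := KF.equivFin with hedef
  set u : Fin m → V := fun p => (e.symm p).1 with hudef
  have humem : ∀ p, u p ∈ W.supp ∧ h (u p) = z := fun p => (hKmem _).mp (e.symm p).2
  have huinj : ∀ p q, u p = u q → p = q := by
    intro p q hpq
    exact e.symm.injective (Subtype.ext hpq)
  have husurj : ∀ c ∈ W.supp, h c = z → ∃ p, u p = c := by
    intro c hc hcz
    exact ⟨e ⟨c, (hKmem c).mpr ⟨hc, hcz⟩⟩, by simp [hudef]⟩
  have hone : ∀ q : Fin m, q + 1 ≠ q := by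
    intro q hc
    have h2 : (1 : Fin m) = 0 := by
      have h3 := add_left_cancel (a := q) (b := (1 : Fin m)) (c := 0)
      rw [add_zero] at h3
      exact h3 hc
    have h3 := congrArg Fin.val h2
    rw [Fin.val_one', Fin.val_zero] at h3
    rw [Nat.mod_eq_of_lt (by omega)] at h3
    omega
  -- a fresh copy of W
  obtain ⟨β, hβinj, hβdisj⟩ :=
    exists_fresh_inj W.supp X.supp (supp_finite W) (supp_finite X)
  have hβX : ∀ a ∈ W.supp, β a ∉ X.supp := by
    intro a ha hc
    exact Set.eq_empty_iff_forall_notMem.mp hβdisj (β a) ⟨⟨a, ha, rfl⟩, hc⟩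
  have hsuppWX : W.supp ⊆ X.supp := supp_mono_of_interp hWt
  have hβW : ∀ a ∈ W.supp, β a ∉ W.supp := fun a ha hc => hβX a ha (hsuppWX hc)
  -- the cyclic matching
  set M : Set (V × V) := (fun q : Fin m => (u q, β (u (q + 1)))) '' Set.univ with hM
  set gm : V → V :=
    fun a => if hc : ∃ q : Fin m, a = β (u (q + 1)) then u hc.choose else a with hgm
  have hgmK' : ∀ q : Fin m, gm (β (u (q + 1))) = u q := by
    intro q
    have hc : ∃ q' : Fin m, β (u (q + 1)) = β (u (q' + 1)) := ⟨q, rfl⟩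
    simp only [hgm, dif_pos hc]
    have h1 : u (q + 1) = u (hc.choose + 1) :=
      hβinj (humem _).1 (humem _).1 hc.choose_spec
    have h2 : q + 1 = hc.choose + 1 := huinj _ _ h1
    rw [(add_right_cancel h2).symm]
  have hgmK : ∀ p : Fin m, gm (β (u p)) = u (p - 1) := by
    intro p
    have h4 := hgmK' (p - 1)
    rwa [sub_add_cancel] at h4
  have hgmX : ∀ a ∈ X.supp, gm a = a := by
    intro a ha
    refine dif_neg ?_
    rintro ⟨q, rfl⟩
    exact hβX _ (humem _).1 ha
  have hgmβW : ∀ c ∈ W.supp, h c ≠ z → gm (β c) = β c := by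
    intro c hc hcz
    refine dif_neg ?_
    rintro ⟨q, heq⟩
    have : c = u (q + 1) := hβinj hc (humem _).1 heq
    exact hcz (this ▸ (humem (q + 1)).2)
  -- the folded copy map
  set ρ : V → V := fun c => if hc : ∃ p : Fin m, c = u p then u (hc.choose - 1) else β c
    with hρ
  have hρK : ∀ p : Fin m, ρ (u p) = u (p - 1) := by
    intro p
    have hc : ∃ p' : Fin m, u p = u p' := ⟨p, rfl⟩
    simp only [hρ, dif_pos hc]
    rw [huinj _ _ hc.choose_spec.symm]
  have hρn : ∀ c, (¬ ∃ p : Fin m, c = u p) → ρ c = β c := by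
    intro c hc
    simp only [hρ, dif_neg hc]
  have hρeq : ∀ c ∈ W.supp, gm (β c) = ρ c := by
    intro c hc
    by_cases hcm : ∃ p : Fin m, c = u p
    · obtain ⟨p, rfl⟩ := hcm
      rw [hgmK p, hρK p]
    · have hcz : h c ≠ z := by
        intro hcon
        obtain ⟨p, hp⟩ := husurj c hc hcon
        exact hcm ⟨p, hp.symm⟩
      rw [hgmβW c hc hcz, hρn c hcm]
  set X' : Str Rel ar V := mapStr gm (X.comp (mapStr β W)) with hX'def
  have hX'eq : X' = X.comp (mapStr ρ W) := by
    rw [hX'def, mapStr_comp_str, mapStr_mapStr]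
    congr 1
    · rw [mapStr_congr (f := gm) (g := id) (fun a ha => hgmX a ha), mapStr_id]
    · exact mapStr_congr (fun c hc => hρeq c hc)
  have hX'interp : ∀ r, X'.interp r = X.interp r ∪ (fun t => ρ ∘ t) '' W.interp r := by
    intro r; rw [hX'eq]; rfl
  have hX'parse : ∀ r, ∀ t ∈ X'.interp r,
      t ∈ X.interp r ∨ ∃ s ∈ W.interp r, t = fun i => ρ (s i) := by
    intro r t ht
    rw [hX'interp] at ht
    rcases ht with ht | ⟨s, hs, rfl⟩
    · exact Or.inl ht
    · exact Or.inr ⟨s, hs, rfl⟩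
  -- matching facts
  have hMsides : ∀ p ∈ M, ∃ q : Fin m, p = (u q, β (u (q + 1))) := by
    rintro p ⟨q, -, rfl⟩
    exact ⟨q, rfl⟩
  have hMmatch : IsMatching M := by
    rintro p hp q hq hne
    obtain ⟨qp, rfl⟩ := hMsides p hp
    obtain ⟨qq, rfl⟩ := hMsides q hq
    apply Set.eq_empty_iff_forall_notMem.mpr
    rintro v ⟨hv1, hv2⟩
    simp only [Set.mem_insert_iff, Set.mem_singleton_iff] at hv1 hv2
    have hqq : qp = qq := by
      rcases hv1 with rfl | rfl <;> rcases hv2 with hv2 | hv2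
      · exact huinj _ _ hv2
      · exact absurd hv2 (fun hc => hβW _ (humem _).1 (hc ▸ (humem qp).1))
      · exact absurd hv2.symm (fun hc => hβW _ (humem _).1 (hc ▸ (humem qq).1))
      · have := hβinj (humem _).1 (humem _).1 hv2
        exact add_right_cancel (huinj _ _ this)
    exact hne (by rw [hqq])
  have hMcompat : CompatibleE (X.comp (mapStr β W)) (EqvOf fun a b => (a, b) ∈ M) := by
    intro r t1 ht1 t2 ht2 hne
    have hchar := eqvOf_matching hMmatch
    by_contra hcon
    push_neg at hcon
    have hc' : ∀ i, t1 i = t2 i ∨ (t1 i, t2 i) ∈ M ∨ (t2 i, t1 i) ∈ M :=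
      fun i => (hchar _ _).mp (hcon i)
    have i0 : Fin (ar r) := ⟨0, har r⟩
    rcases (show t1 ∈ X.interp r ∪ (mapStr β W).interp r from ht1) with h1 | h1 <;>
      rcases (show t2 ∈ X.interp r ∪ (mapStr β W).interp r from ht2) with h2 | h2
    · obtain ⟨i, hi⟩ := tuple_ne_iff hne
      rcases hc' i with hc | hc | hc
      · exact hi hc
      · obtain ⟨q, hq⟩ := hMsides _ hc
        have e2 : t2 i = β (u (q + 1)) := congrArg Prod.snd hq
        exact hβX _ (humem _).1 (e2 ▸ mem_supp_of_tuple h2 i)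
      · obtain ⟨q, hq⟩ := hMsides _ hc
        have e2 : t1 i = β (u (q + 1)) := congrArg Prod.snd hq
        exact hβX _ (humem _).1 (e2 ▸ mem_supp_of_tuple h1 i)
    · -- t1 in X, t2 in copy
      obtain ⟨s2, hs2, rfl⟩ := h2
      have hkey : ∀ i, ∃ q : Fin m, t1 i = u q ∧ s2 i = u (q + 1) := by
        intro i
        rcases hc' i with hc | hc | hc
        · have hc2 : t1 i = β (s2 i) := hc
          exact absurd (hc2 ▸ mem_supp_of_tuple h1 i)
            (hβX _ (mem_supp_of_tuple hs2 i))
        · obtain ⟨q, hq⟩ := hMsides _ hc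
          have e1 : t1 i = u q := congrArg Prod.fst hq
          have e2 : β (s2 i) = β (u (q + 1)) := congrArg Prod.snd hq
          exact ⟨q, e1, hβinj (mem_supp_of_tuple hs2 i) (humem _).1 e2⟩
        · obtain ⟨q, hq⟩ := hMsides _ hc
          have e1 : β (s2 i) = u q := congrArg Prod.fst hq
          exact absurd (e1 ▸ (humem q).1)
            (hβW _ (mem_supp_of_tuple hs2 i))
      have ht1W : t1 ∈ W.interp r := by
        rcases hINVA r t1 h1 with hW | hA
        · exact hW
        · obtain ⟨q, e1, -⟩ := hkey i0
          exact absurd (List.mem_cons_self (a := z) (l := L'))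
            (hA i0 (e1 ▸ (humem q).1) ∘ fun hc => by rw [e1, (humem q).2]; exact hc)
      have ht1s2 : t1 = s2 := by
        by_contra hne2
        obtain ⟨i, hi⟩ := hch r t1 ht1W s2 hs2 hne2
        obtain ⟨q, e1, e2⟩ := hkey i
        rw [e1, e2, (humem q).2, (humem (q + 1)).2] at hi
        exact hi rfl
      obtain ⟨q, e1, e2⟩ := hkey i0
      rw [ht1s2, e2] at e1
      exact hone q (huinj _ _ e1)
    · -- t1 in copy, t2 in X
      obtain ⟨s1, hs1, rfl⟩ := h1
      have hkey : ∀ i, ∃ q : Fin m, t2 i = u q ∧ s1 i = u (q + 1) := by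
        intro i
        rcases hc' i with hc | hc | hc
        · have hc2 : t2 i = β (s1 i) := hc.symm
          exact absurd (hc2 ▸ mem_supp_of_tuple h2 i)
            (hβX _ (mem_supp_of_tuple hs1 i))
        · obtain ⟨q, hq⟩ := hMsides _ hc
          have e1 : β (s1 i) = u q := congrArg Prod.fst hq
          exact absurd (e1 ▸ (humem q).1)
            (hβW _ (mem_supp_of_tuple hs1 i))
        · obtain ⟨q, hq⟩ := hMsides _ hc
          have e1 : t2 i = u q := congrArg Prod.fst hq
          have e2 : β (s1 i) = β (u (q + 1)) := congrArg Prod.snd hq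
          exact ⟨q, e1, hβinj (mem_supp_of_tuple hs1 i) (humem _).1 e2⟩
      have ht2W : t2 ∈ W.interp r := by
        rcases hINVA r t2 h2 with hW | hA
        · exact hW
        · obtain ⟨q, e1, -⟩ := hkey i0
          exact absurd (List.mem_cons_self (a := z) (l := L'))
            (hA i0 (e1 ▸ (humem q).1) ∘ fun hc => by rw [e1, (humem q).2]; exact hc)
      have ht2s1 : t2 = s1 := by
        by_contra hne2
        obtain ⟨i, hi⟩ := hch r t2 ht2W s1 hs1 hne2
        obtain ⟨q, e1, e2⟩ := hkey i
        rw [e1, e2, (humem q).2, (humem (q + 1)).2] at hi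
        exact hi rfl
      obtain ⟨q, e1, e2⟩ := hkey i0
      rw [ht2s1, e2] at e1
      exact hone q (huinj _ _ e1)
    · -- both in copy
      obtain ⟨s1, hs1, rfl⟩ := h1
      obtain ⟨s2, hs2, rfl⟩ := h2
      have hsne : s1 ≠ s2 := by rintro rfl; exact hne rfl
      obtain ⟨i, hi⟩ := tuple_ne_iff hsne
      rcases hc' i with hc | hc | hc
      · exact hi (hβinj (mem_supp_of_tuple hs1 i) (mem_supp_of_tuple hs2 i) hc)
      · obtain ⟨q, hq⟩ := hMsides _ hc
        have e1 : β (s1 i) = u q := congrArg Prod.fst hq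
        exact hβW _ (mem_supp_of_tuple hs1 i) (e1 ▸ (humem q).1)
      · obtain ⟨q, hq⟩ := hMsides _ hc
        have e1 : β (s2 i) = u q := congrArg Prod.fst hq
        exact hβW _ (mem_supp_of_tuple hs2 i) (e1 ▸ (humem q).1)
  have hgmiff : ∀ a ∈ (X.comp (mapStr β W)).supp, ∀ b ∈ (X.comp (mapStr β W)).supp,
      ((EqvOf fun p q => (p, q) ∈ M) a b ↔ gm a = gm b) := by
    intro a ha b hb
    have hchar := eqvOf_matching hMmatch
    have hsupp : (X.comp (mapStr β W)).supp = X.supp ∪ β '' W.supp := by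
      rw [supp_comp, supp_mapStr]
    rw [hsupp] at ha hb
    rw [hchar]
    rcases ha with ha | ⟨c, hc, rfl⟩ <;> rcases hb with hb | ⟨c', hc', rfl⟩
    · rw [hgmX a ha, hgmX b hb]
      constructor
      · rintro (hc | hc | hc)
        · exact hc
        · obtain ⟨q, hq⟩ := hMsides _ hc
          have e2 : b = β (u (q + 1)) := congrArg Prod.snd hq
          exact absurd (e2 ▸ hb) (hβX _ (humem _).1)
        · obtain ⟨q, hq⟩ := hMsides _ hc
          have e2 : a = β (u (q + 1)) := congrArg Prod.snd hq
          exact absurd (e2 ▸ ha) (hβX _ (humem _).1)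
      · exact fun hc => Or.inl hc
    · rw [hgmX a ha]
      constructor
      · rintro (hc | hc | hc)
        · exact absurd (hc ▸ ha) (hβX _ hc')
        · obtain ⟨q, hq⟩ := hMsides _ hc
          have e1 : a = u q := congrArg Prod.fst hq
          have e2 : β c' = β (u (q + 1)) := congrArg Prod.snd hq
          rw [e2, hgmK' q, e1]
        · obtain ⟨q, hq⟩ := hMsides _ hc
          have e1 : β c' = u q := congrArg Prod.fst hq
          exact absurd (e1 ▸ (humem q).1) (hβW _ hc')
      · intro hgeq
        by_cases hcm : ∃ p : Fin m, c' = u p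
        · obtain ⟨p, rfl⟩ := hcm
          rw [hgmK p] at hgeq
          refine Or.inr (Or.inl ?_)
          have hp : p = (p - 1) + 1 := (sub_add_cancel p 1).symm
          refine ⟨p - 1, Set.mem_univ _, ?_⟩
          simp only [Prod.mk.injEq]
          exact ⟨hgeq.symm, by rw [← hp]⟩
        · have hcz : h c' ≠ z := by
            intro hcon
            obtain ⟨p, hp⟩ := husurj c' hc' hcon
            exact hcm ⟨p, hp.symm⟩
          rw [hgmβW c' hc' hcz] at hgeq
          exact absurd (hgeq ▸ ha) (hβX _ hc')
    · rw [hgmX b hb]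
      constructor
      · rintro (hcc | hcc | hcc)
        · exact absurd (hcc.symm ▸ hb) (hβX _ hc)
        · obtain ⟨q, hq⟩ := hMsides _ hcc
          have e1 : β c = u q := congrArg Prod.fst hq
          exact absurd (e1 ▸ (humem q).1) (hβW _ hc)
        · obtain ⟨q, hq⟩ := hMsides _ hcc
          have e1 : b = u q := congrArg Prod.fst hq
          have e2 : β c = β (u (q + 1)) := congrArg Prod.snd hq
          rw [e2, hgmK' q, e1]
      · intro hgeq
        by_cases hcm : ∃ p : Fin m, c = u p
        · obtain ⟨p, rfl⟩ := hcm
          rw [hgmK p] at hgeq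
          refine Or.inr (Or.inr ?_)
          have hp : p = (p - 1) + 1 := (sub_add_cancel p 1).symm
          refine ⟨p - 1, Set.mem_univ _, ?_⟩
          simp only [Prod.mk.injEq]
          exact ⟨hgeq, by rw [← hp]⟩
        · have hcz : h c ≠ z := by
            intro hcon
            obtain ⟨p, hp⟩ := husurj c hc hcon
            exact hcm ⟨p, hp.symm⟩
          rw [hgmβW c hc hcz] at hgeq
          exact absurd (hgeq.symm ▸ hb) (hβX _ hc)
    · constructor
      · rintro (hcc | hcc | hcc)
        · rw [hcc]
        · obtain ⟨q, hq⟩ := hMsides _ hcc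
          have e1 : β c = u q := congrArg Prod.fst hq
          exact absurd (e1 ▸ (humem q).1) (hβW _ hc)
        · obtain ⟨q, hq⟩ := hMsides _ hcc
          have e1 : β c' = u q := congrArg Prod.fst hq
          exact absurd (e1 ▸ (humem q).1) (hβW _ hc')
      · intro hgeq
        have hccg : c = c' := by
          by_cases hcm : ∃ p : Fin m, c = u p <;>
            by_cases hcm' : ∃ p : Fin m, c' = u p
          · obtain ⟨p, rfl⟩ := hcm
            obtain ⟨p', rfl⟩ := hcm'
            rw [hgmK p, hgmK p'] at hgeq
            have := huinj _ _ hgeq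
            have : p = p' := by
              have h4 := congrArg (· + (1 : Fin m)) this
              simpa [sub_add_cancel] using h4
            rw [this]
          · have hcz' : h c' ≠ z := by
              intro hcon
              obtain ⟨p, hp⟩ := husurj c' hc' hcon
              exact hcm' ⟨p, hp.symm⟩
            obtain ⟨p, rfl⟩ := hcm
            rw [hgmK p, hgmβW c' hc' hcz'] at hgeq
            exact absurd (hgeq ▸ (humem (p - 1)).1) (hβW _ hc')
          · have hcz : h c ≠ z := by
              intro hcon
              obtain ⟨p, hp⟩ := husurj c hc hcon
              exact hcm ⟨p, hp.symm⟩
            obtain ⟨p, rfl⟩ := hcm'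
            rw [hgmβW c hc hcz, hgmK p] at hgeq
            exact absurd (hgeq.symm ▸ (humem (p - 1)).1) (hβW _ hc)
          · have hcz : h c ≠ z := by
              intro hcon
              obtain ⟨p, hp⟩ := husurj c hc hcon
              exact hcm ⟨p, hp.symm⟩
            have hcz' : h c' ≠ z := by
              intro hcon
              obtain ⟨p, hp⟩ := husurj c' hc' hcon
              exact hcm' ⟨p, hp.symm⟩
            rw [hgmβW c hc hcz, hgmβW c' hc' hcz'] at hgeq
            exact hβinj hc hc' hgeq
        rw [hccg]
        exact Or.inl rfl
  have hX'ef : efStar C X' := by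
    refine efStar.fuse hX hWef ⟨X, mapStr β W, M, ⟨id, fun a _ b _ hc => hc,
      (mapStr_id X).symm⟩, ⟨β, hβinj, rfl⟩, ?_, ?_, hMmatch, ?_, hMcompat, gm, hgmiff, rfl⟩
    · apply Set.eq_empty_iff_forall_notMem.mpr
      rintro v ⟨hv1, hv2⟩
      rw [supp_mapStr] at hv2
      obtain ⟨c, hc, rfl⟩ := hv2
      exact hβX c hc hv1
    · exact ⟨(u 0, β (u (0 + 1))), ⟨0, Set.mem_univ _, rfl⟩⟩
    · rintro p hp
      obtain ⟨q, rfl⟩ := hMsides _ hp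
      refine ⟨hsuppWX (humem q).1, ?_⟩
      rw [supp_mapStr]
      exact ⟨u (q + 1), (humem _).1, rfl⟩
  -- the new fiber data
  set J : Set V := {w | w ∈ W.supp ∧ h w ≠ z ∧ Reach W (u 0) w} with hJ
  set D' : Set V := D ∪ β '' J with hD'
  set F' : V → V := fun a => if ∃ w ∈ W.supp, a = β w then z else F a with hF'def
  have hβD : ∀ w ∈ W.supp, β w ∉ D := fun w hw hc => hβX w hw (hD hc)
  have hF'D : ∀ c ∈ D, F' c = F c := by
    intro c hc
    refine if_neg ?_
    rintro ⟨w, hw, rfl⟩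
    exact hβD w hw hc
  have hF'β : ∀ w ∈ W.supp, F' (β w) = z := fun w hw => if_pos ⟨w, hw, rfl⟩
  have hXsub : ∀ r, X.interp r ⊆ X'.interp r := by
    intro r t ht; rw [hX'interp]; exact Or.inl ht
  have hsuppX' : X.supp ⊆ X'.supp := supp_mono_of_interp hXsub
  have hρsupp : ∀ w ∈ W.supp, ρ w ∈ X'.supp := by
    intro w hw
    have hss : X'.supp = X.supp ∪ ρ '' W.supp := by rw [hX'eq, supp_comp, supp_mapStr]
    rw [hss]; exact Or.inr ⟨w, hw, rfl⟩
  have hρcase : ∀ w ∈ W.supp,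
      (∃ p : Fin m, w = u p ∧ ρ w = u (p - 1)) ∨ (h w ≠ z ∧ ρ w = β w) := by
    intro w hw
    by_cases hcm : ∃ p : Fin m, w = u p
    · obtain ⟨p, rfl⟩ := hcm; exact Or.inl ⟨p, rfl, hρK p⟩
    · have hwz : h w ≠ z := by
        intro hcon
        obtain ⟨p, hp⟩ := husurj w hw hcon
        exact hcm ⟨p, hp.symm⟩
      exact Or.inr ⟨hwz, hρn w hcm⟩
  set relz : V → V → Prop :=
    fun c d => c ∈ D' ∧ d ∈ D' ∧ F' c = z ∧ F' d = z ∧ Touching X' c d with hrelz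
  have hrelzsymm : ∀ c d, relz c d → relz d c := by
    rintro c d ⟨h1, h2, h3, h4, h5⟩
    exact ⟨h2, h1, h4, h3, touching_symm h5⟩
  have hfibmem : ∀ w ∈ W.supp, Reach W (u 0) w → ρ w ∈ D' ∧ F' (ρ w) = z := by
    intro w hw hr
    rcases hρcase w hw with ⟨p, hwp, hρw⟩ | ⟨hwz, hρw⟩
    · constructor
      · rw [hρw]; exact Or.inl (hWD (humem (p - 1)).1)
      · rw [hρw, hF'D _ (hWD (humem (p - 1)).1), hF _ (humem (p - 1)).1]
        exact (humem (p - 1)).2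
    · constructor
      · rw [hρw]; exact Or.inr ⟨w, ⟨hw, hwz, hr⟩, rfl⟩
      · rw [hρw]; exact hF'β w hw
  have hanchor : ∀ w, Reach W (u 0) w → w ∈ W.supp →
      Relation.ReflTransGen relz (ρ w) (ρ (u 0)) := by
    intro w hr
    induction hr with
    | refl => exact fun _ => Relation.ReflTransGen.refl
    | @tail b c hb hstep ih =>
        intro hcw
        obtain ⟨r, t, ht, ⟨i, hi⟩, ⟨j, hj⟩⟩ := hstep
        have hbw : b ∈ W.supp := by rw [← hi]; exact mem_supp_of_tuple ht i
        have hgc : Reach W (u 0) c :=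
          Relation.ReflTransGen.tail hb ⟨r, t, ht, ⟨i, hi⟩, ⟨j, hj⟩⟩
        have htouch : Touching X' (ρ b) (ρ c) := by
          refine ⟨r, fun i' => ρ (t i'), ?_, ⟨i, by show ρ (t i) = ρ b; rw [hi]⟩,
            ⟨j, by show ρ (t j) = ρ c; rw [hj]⟩⟩
          rw [hX'interp]
          exact Or.inr ⟨t, ht, rfl⟩
        have hm1 := hfibmem b hbw hb
        have hm2 := hfibmem c hcw hgc
        exact Relation.ReflTransGen.head
          ⟨hm2.1, hm1.1, hm2.2, hm1.2, touching_symm htouch⟩ (ih hbw)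
  have hreachu : ∀ p : Fin m, Reach W (u 0) (u p) := by
    intro p
    by_cases hp : u p = u 0
    · rw [hp]
      exact Relation.ReflTransGen.refl
    · exact hintra (u 0) (humem 0).1 (u p) (humem p).1
        (by rw [(humem 0).2, (humem p).2]) (fun hc => hp hc.symm)
  have hJρ : ∀ w, w ∈ W.supp → h w ≠ z → β w = ρ w := by
    intro w hw hwz
    refine (hρn w ?_).symm
    rintro ⟨p, rfl⟩
    exact hwz (humem p).2
  have hfibz : ∀ a, a ∈ D' → F' a = z → Relation.ReflTransGen relz a (ρ (u 0)) := by
    intro a haD haF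
    rcases haD with haD | ⟨w, hwJ, rfl⟩
    · have haF2 : F a = z := by rw [← hF'D a haD]; exact haF
      by_cases haW : a ∈ W.supp
      · have haz : h a = z := by rw [← hF a haW]; exact haF2
        obtain ⟨p, hp⟩ := husurj a haW haz
        have hrw : a = ρ (u (p + 1)) := by rw [hρK (p + 1), add_sub_cancel_right, hp]
        rw [hrw]
        exact hanchor (u (p + 1)) (hreachu (p + 1)) (humem (p + 1)).1
      · obtain ⟨z'', hz1, hz2, hz3⟩ := hjunk a haD haW
        have hzz : z'' = z := by rw [← hz3, haF2]
        exact absurd (List.mem_cons_self (a := z) (l := L')) (hzz ▸ hz1)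
    · obtain ⟨hw1, hw2, hw3⟩ := hwJ
      rw [hJρ w hw1 hw2]
      exact hanchor w hw3 hw1
  refine ⟨⟨X', F', D', hX'ef, ?_, ?_, ?_, ?_, ?_, ?_, ?_⟩⟩
  · rintro a (haD | ⟨w, hwJ, rfl⟩)
    · exact hsuppX' (hD haD)
    · rw [hJρ w hwJ.1 hwJ.2.1]
      exact hρsupp w hwJ.1
  · exact fun a ha => Or.inl (hWD ha)
  · exact fun r => (hWt r).trans (hXsub r)
  · intro a ha
    rw [hF'D a (hWD ha)]
    exact hF a ha
  · intro r t ht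
    rcases hX'parse r t ht with hX1 | ⟨s, hs, rfl⟩
    · rcases hINVA r t hX1 with h1 | h1
      · exact Or.inl h1
      · exact Or.inr fun i hi hmem => h1 i hi (List.mem_cons_of_mem _ hmem)
    · refine Or.inr ?_
      intro i hi hmem
      have hi' : ρ (s i) ∈ W.supp := hi
      have hmem' : h (ρ (s i)) ∈ L' := hmem
      rcases hρcase (s i) (mem_supp_of_tuple hs i) with ⟨p, hsp, hρw⟩ | ⟨hwz, hρw⟩
      · rw [hρw] at hmem'
        exact hzL ((humem (p - 1)).2 ▸ hmem')
      · rw [hρw] at hi'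
        exact hβW _ (mem_supp_of_tuple hs i) hi'
  · rintro c (hcD | ⟨w, hwJ, rfl⟩) hcs
    · obtain ⟨z', h1, h2, h3⟩ := hjunk c hcD hcs
      exact ⟨z', fun hc => h1 (List.mem_cons_of_mem _ hc), h2,
        by rw [hF'D c hcD]; exact h3⟩
    · exact ⟨z, hzL, hm, hF'β w hwJ.1⟩
  · intro z'' hmz'' hz''L a haD haF b hbD hbF
    by_cases hzz : z'' = z
    · subst hzz
      exact Relation.ReflTransGen.trans (hfibz a haD haF)
        (rtg_symm hrelzsymm (hfibz b hbD hbF))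
    · have hz''old : z'' ∉ z :: L' := by
        intro hc
        rcases List.mem_cons.mp hc with hc | hc
        · exact hzz hc
        · exact hz''L hc
      have haD2 : a ∈ D := by
        rcases haD with h1 | ⟨w, hwJ, rfl⟩
        · exact h1
        · rw [hF'β w hwJ.1] at haF
          exact absurd haF.symm hzz
      have hbD2 : b ∈ D := by
        rcases hbD with h1 | ⟨w, hwJ, rfl⟩
        · exact h1
        · rw [hF'β w hwJ.1] at hbF
          exact absurd hbF.symm hzz
      have haF2 : F a = z'' := by rw [← hF'D a haD2]; exact haF
      have hbF2 : F b = z'' := by rw [← hF'D b hbD2]; exact hbF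
      have hold := hfib z'' hmz'' hz''old a haD2 haF2 b hbD2 hbF2
      refine Relation.ReflTransGen.mono ?_ _ _ hold
      rintro c d ⟨h1, h2, h3, h4, h5⟩
      exact ⟨Or.inl h1, Or.inl h2, by rw [hF'D c h1]; exact h3,
        by rw [hF'D d h2]; exact h4, touching_mono hXsub h5⟩

theorem bstate_rec [Infinite V] (har : ∀ r, 1 ≤ ar r) {C : Set (Str Rel ar V)}
    {W : Str Rel ar V} {h : V → V} (hWef : efStar C W) (hch : CompatH W h)
    (hintra : ∀ a ∈ W.supp, ∀ b ∈ W.supp, h a = h b → a ≠ b → Reach W a b) :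
    ∀ L : List V, L.Nodup → BState C W h L → Nonempty (BState C W h []) := by
  intro L
  induction L with
  | nil => exact fun _ st => ⟨st⟩
  | cons z L' ih =>
      intro hnd st
      by_cases hmz : MultiP W h z
      · obtain ⟨st'⟩ := bstate_step har hWef hch hintra hmz
          (fun hc => (List.nodup_cons.mp hnd).1 hc) st
        exact ih (List.Nodup.of_cons hnd) st'
      · exact ih (List.Nodup.of_cons hnd) (bstate_weaken hmz st)

theorem intra_tw_bound [Infinite V] (har : ∀ r, 1 ≤ ar r) {C : Set (Str Rel ar V)}
    (k : ℕ) (hk : ∀ X : Str Rel ar V, efStar C X → tw X ≤ k)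
    (W : Str Rel ar V) (h : V → V) (hWef : efStar C W) (hch : CompatH W h)
    (hintra : ∀ a ∈ W.supp, ∀ b ∈ W.supp, h a = h b → a ≠ b → Reach W a b) :
    tw (mapStr h W) ≤ k := by
  classical
  -- the list of multi-class values
  have hmfin : {z | MultiP W h z}.Finite := by
    refine Set.Finite.subset ((supp_finite W).image h) ?_
    rintro z ⟨a, ha, b, hb, hne, rfl, h2⟩
    exact ⟨a, ha, rfl⟩
  set L0 : List V := hmfin.toFinset.toList with hL0
  have hL0nd : L0.Nodup := Finset.nodup_toList _
  have hL0mem : ∀ z, MultiP W h z → z ∈ L0 := by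
    intro z hz
    rw [hL0, Finset.mem_toList, Set.Finite.mem_toFinset]
    exact hz
  have st0 : BState C W h L0 :=
    { X := W
      F := h
      D := W.supp
      hX := hWef
      hD := le_rfl.subset
      hWD := le_rfl.subset
      hWt := fun r => le_rfl.subset
      hF := fun a _ => rfl
      hINVA := fun r t ht => Or.inl ht
      hjunk := fun c hc hcs => absurd hc hcs
      hfib := fun z' hm hnm => absurd (hL0mem z' hm) hnm }
  obtain ⟨⟨X, F, D, hX, hD, hWD, hWt, hF, hINVA, hjunk, hfib⟩⟩ :=
    bstate_rec har hWef hch hintra L0 hL0nd st0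
  refine le_trans (tw_minor X (mapStr h W) F D hD ?_ ?_) (hk X hX)
  · rintro r t' ⟨s, hs, rfl⟩
    refine ⟨s, hWt r hs, fun i => hWD (mem_supp_of_tuple hs i), ?_⟩
    funext i
    exact hF (s i) (mem_supp_of_tuple hs i)
  · intro zz hzz a haD haF b hbD hbF
    by_cases hmz : MultiP W h zz
    · exact hfib zz hmz (List.not_mem_nil (a := zz)) a haD haF b hbD hbF
    · have haW : a ∈ W.supp := by
        by_contra hc
        obtain ⟨z', hz1, hz2, hz3⟩ := hjunk a haD hc
        rw [hz3] at haF
        exact hmz (haF ▸ hz2)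
      have hbW : b ∈ W.supp := by
        by_contra hc
        obtain ⟨z', hz1, hz2, hz3⟩ := hjunk b hbD hc
        rw [hz3] at hbF
        exact hmz (hbF ▸ hz2)
      have : a = b := by
        by_contra hne
        refine hmz ⟨a, haW, b, hbW, hne, ?_, ?_⟩
        · rw [← hF a haW]; exact haF
        · rw [← hF b hbW]; exact hbF
      subst this
      exact Relation.ReflTransGen.refl

end Aux7
section Aux8

open Classical

variable {Rel : Type} {ar : Rel → ℕ} {V : Type}

theorem quot_tw_bound [Infinite V] (har : ∀ r, 1 ≤ ar r) {C : Set (Str Rel ar V)}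
    (k : ℕ) (hk : ∀ X : Str Rel ar V, efStar C X → tw X ≤ k) :
    ∀ (n : ℕ) (W : Str Rel ar V) (h : V → V), efStar C W → CompatH W h →
      (crossSet W h).ncard ≤ n → tw (mapStr h W) ≤ k := by
  intro n
  induction n with
  | zero =>
      intro W h hW hch hcard
      have hempty : crossSet W h = ∅ :=
        (Set.ncard_eq_zero (crossSet_finite W h)).mp (Nat.le_zero.mp hcard)
      refine intra_tw_bound har k hk W h hW hch ?_
      intro a ha b hb hab hne
      by_contra hc
      exact Set.eq_empty_iff_forall_notMem.mp hempty (a, b) ⟨ha, hb, hab, hne, hc⟩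
  | succ n ih =>
      intro W h hW hch hcard
      by_cases hempty : crossSet W h = ∅
      · refine intra_tw_bound har k hk W h hW hch ?_
        intro a ha b hb hab hne
        by_contra hc
        exact Set.eq_empty_iff_forall_notMem.mp hempty (a, b) ⟨ha, hb, hab, hne, hc⟩
      · obtain ⟨⟨x, y⟩, hxy⟩ := Set.nonempty_iff_ne_empty.mpr hempty
        obtain ⟨W₂, h₂, hW₂, hch₂, hsub, hlt⟩ := cross_elim har C W h hW hch hxy
        refine le_trans (tw_le_of_interp_subset _ _ hsub) ?_
        exact ih W₂ h₂ hW₂ hch₂ (by omega)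

end Aux8
/-- Lemma 3.23: if the closure of the canonical models under
external fusions is treewidth-bounded, then so is the closure under both internal and
external fusions. -/
theorem internal_external_fusion_twb
    (Rel : Type) [Fintype Rel] (ar : Rel → ℕ) (har : ∀ r, 1 ≤ ar r)
    (V : Type) [Infinite V] (Pr : Type) (pa : Pr → ℕ)
    (Δ : SID Rel ar Pr pa) (A : Pr) (hA : pa A = 0) :
    TWB (efStarSet (Canonical (V := V) Δ (natom A))) →
      TWB (iefStarSet (Canonical (V := V) Δ (natom A))) := by
  rintro ⟨k, hk⟩
  refine ⟨k, ?_⟩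
  intro S hS
  obtain ⟨W, h, hW, hch, rfl⟩ :=
    iefStar_quot har (Canonical (V := V) Δ (natom A)) S hS
  exact quot_tw_bound har k (fun X hX => hk X hX) (crossSet W h).ncard W h hW hch le_rfl

end SLRTW
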